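/- arXiv:1912.01245 — 6 statements merged into one kernel-verified Lean document; each statement's English description precedes it below -/
import Mathlib

section
/- For every ν > 2 and every t ∈ ℝ, the following integral identity holds: −i t ∫_{-∞}^{∞} x² e^{itx} f_ν(x) dx + (ν − 1) ∫_{-∞}^{∞} x e^{itx} f_ν(x) dx − i ν t ∫_{-∞}^{∞} e^{itx} f_ν(x) dx = 0, where all three integrals converge absolutely because ν > 2. -/
open MeasureTheory Real Complex

/-- Student's t density with `ν` degrees of freedom. -/
noncomputable def studentDensity (ν x : ℝ) : ℝ :=
  (Real.Gamma ((ν + 1) / 2) / (Real.sqrt (Real.pi * ν) * Real.Gamma (ν / 2))) *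
    (1 + x ^ 2 / ν) ^ (-(ν + 1) / 2)

noncomputable def sdc (ν : ℝ) : ℝ :=
  Real.Gamma ((ν + 1) / 2) / (Real.sqrt (Real.pi * ν) * Real.Gamma (ν / 2))

lemma studentDensity_eq (ν x : ℝ) :
    studentDensity ν x = sdc ν * (1 + x ^ 2 / ν) ^ (-(ν + 1) / 2) := rfl

lemma key_bound {ν : ℝ} (hν : 2 < ν) (x : ℝ) {k : ℕ} (hk : k ≤ 2) :
    |x| ^ k * (1 + x ^ 2 / ν) ^ (-(ν + 1) / 2) ≤
      ν * ν ^ ((ν - 1) / 2) * (1 + x ^ 2) ^ (-(ν - 1) / 2) := by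
  have hν0 : (0:ℝ) < ν := by linarith
  have hu : 0 < 1 + x ^ 2 / ν := by positivity
  have h1 : |x| ^ k ≤ ν + x ^ 2 := by
    interval_cases k
    · simp only [pow_zero]; nlinarith [sq_nonneg x]
    · simp only [pow_one]; nlinarith [_root_.sq_abs x, sq_nonneg (|x| - 1)]
    · rw [_root_.sq_abs]; nlinarith [sq_nonneg x]
  have hz : -(ν - 1) / 2 ≤ 0 := by linarith
  calc |x| ^ k * (1 + x ^ 2 / ν) ^ (-(ν + 1) / 2)
      ≤ (ν + x ^ 2) * (1 + x ^ 2 / ν) ^ (-(ν + 1) / 2) := by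
        have := Real.rpow_pos_of_pos hu (-(ν + 1) / 2)
        nlinarith
    _ = ν * (1 + x ^ 2 / ν) ^ (-(ν - 1) / 2) := by
        have h2 : (1 + x ^ 2 / ν) ^ (-(ν - 1) / 2)
            = (1 + x ^ 2 / ν) * (1 + x ^ 2 / ν) ^ (-(ν + 1) / 2) := by
          rw [show -(ν - 1) / 2 = 1 + -(ν + 1) / 2 by ring, Real.rpow_add hu, Real.rpow_one]
        rw [h2]
        have : ν + x ^ 2 = ν * (1 + x ^ 2 / ν) := by field_simp
        rw [this, mul_assoc]
    _ ≤ ν * (ν ^ ((ν - 1) / 2) * (1 + x ^ 2) ^ (-(ν - 1) / 2)) := by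
        have h3 : (1 + x ^ 2 / ν) ^ (-(ν - 1) / 2) ≤ ((1 + x ^ 2) / ν) ^ (-(ν - 1) / 2) := by
          apply Real.rpow_le_rpow_of_nonpos (by positivity) _ hz
          rw [div_le_iff₀ hν0]
          have hex : (1 + x ^ 2 / ν) * ν = ν + x ^ 2 := by field_simp
          rw [hex]
          nlinarith [sq_nonneg x]
        have h4 : ((1 + x ^ 2) / ν) ^ (-(ν - 1) / 2)
            = ν ^ ((ν - 1) / 2) * (1 + x ^ 2) ^ (-(ν - 1) / 2) := by
          rw [Real.div_rpow (by positivity) hν0.le,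
            show -(ν - 1) / 2 = -((ν - 1) / 2) by ring,
            Real.rpow_neg hν0.le, Real.rpow_neg (by positivity : (0:ℝ) ≤ 1 + x ^ 2)]
          field_simp
        rw [← h4]
        exact mul_le_mul_of_nonneg_left h3 hν0.le
    _ = ν * ν ^ ((ν - 1) / 2) * (1 + x ^ 2) ^ (-(ν - 1) / 2) := by ring

lemma integrable_bound {ν : ℝ} (hν : 2 < ν) :
    Integrable (fun x : ℝ => (1 + x ^ 2) ^ (-(ν - 1) / 2)) := by
  have h := integrable_rpow_neg_one_add_norm_sq (E := ℝ) (μ := volume) (r := ν - 1)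
    (by rw [Module.finrank_self]; push_cast; linarith)
  simpa [Real.norm_eq_abs, _root_.sq_abs, neg_div] using h

lemma integrable_F {ν : ℝ} (hν : 2 < ν) (t : ℝ) {k : ℕ} (hk : k ≤ 2) :
    Integrable (fun x : ℝ => (x : ℂ) ^ k * Complex.exp (Complex.I * t * x) *
      (studentDensity ν x : ℂ)) := by
  have hν0 : (0:ℝ) < ν := by linarith
  have hcont : Continuous fun x : ℝ => (x : ℂ) ^ k * Complex.exp (Complex.I * t * x) *
      (studentDensity ν x : ℂ) := by
    apply Continuous.mul
    · exact ((Complex.continuous_ofReal.pow k).mul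
        (Complex.continuous_exp.comp (by continuity)))
    · apply Complex.continuous_ofReal.comp
      unfold studentDensity
      apply Continuous.mul continuous_const
      apply Continuous.rpow_const (by continuity)
      intro x
      left
      positivity
  refine ((integrable_bound hν).const_mul (|sdc ν| * (ν * ν ^ ((ν - 1) / 2)))).mono'
    hcont.aestronglyMeasurable (Filter.Eventually.of_forall fun x => ?_)
  have hu : 0 < 1 + x ^ 2 / ν := by positivity
  have hnorm : ‖(x : ℂ) ^ k * Complex.exp (Complex.I * t * x) * (studentDensity ν x : ℂ)‖
      = |x| ^ k * |studentDensity ν x| := by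
    simp [Complex.norm_exp, Complex.mul_re]
  rw [hnorm, studentDensity_eq, abs_mul,
    abs_of_pos (Real.rpow_pos_of_pos hu _)]
  have hb := key_bound hν x hk
  have habs : (0:ℝ) ≤ |sdc ν| := abs_nonneg _
  calc |x| ^ k * (|sdc ν| * (1 + x ^ 2 / ν) ^ (-(ν + 1) / 2))
      = |sdc ν| * (|x| ^ k * (1 + x ^ 2 / ν) ^ (-(ν + 1) / 2)) := by ring
    _ ≤ |sdc ν| * (ν * ν ^ ((ν - 1) / 2) * (1 + x ^ 2) ^ (-(ν - 1) / 2)) :=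
        mul_le_mul_of_nonneg_left hb habs
    _ = |sdc ν| * (ν * ν ^ ((ν - 1) / 2)) * (1 + x ^ 2) ^ (-(ν - 1) / 2) := by ring

noncomputable def gfun (ν t : ℝ) (x : ℝ) : ℂ :=
  ((sdc ν * ν : ℝ) : ℂ) * (Complex.exp (Complex.I * t * x) *
    (((1 + x ^ 2 / ν) ^ (-(ν - 1) / 2) : ℝ) : ℂ))

lemma hasDerivAt_gfun {ν : ℝ} (hν : 2 < ν) (t x : ℝ) :
    HasDerivAt (gfun ν t)
      (Complex.I * t * ((x : ℂ) ^ 2 * Complex.exp (Complex.I * t * x) *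
          (studentDensity ν x : ℂ))
        + Complex.I * ν * t * (Complex.exp (Complex.I * t * x) * (studentDensity ν x : ℂ))
        - (ν - 1) * ((x : ℂ) * Complex.exp (Complex.I * t * x) *
          (studentDensity ν x : ℂ))) x := by
  have hν0 : (0:ℝ) < ν := by linarith
  have hu : 0 < 1 + x ^ 2 / ν := by positivity
  -- derivative of the exponential factor
  have hE : HasDerivAt (fun x : ℝ => Complex.exp (Complex.I * t * x))
      (Complex.exp (Complex.I * t * x) * (Complex.I * t)) x := by
    have hid : HasDerivAt (fun y : ℝ => ((y : ℝ) : ℂ)) ((1:ℝ) : ℂ) x :=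
      HasDerivAt.ofReal_comp (hasDerivAt_id x)
    have hin : HasDerivAt (fun y : ℝ => Complex.I * t * (y : ℂ))
        (Complex.I * t * 1) x := hid.const_mul (Complex.I * t)
    simpa using hin.cexp
  -- derivative of the real rpow factor
  have hinner : HasDerivAt (fun x : ℝ => 1 + x ^ 2 / ν) (2 * x / ν) x := by
    have h := ((hasDerivAt_pow 2 x).div_const ν).const_add 1
    simpa using h
  have hr : HasDerivAt (fun x : ℝ => (1 + x ^ 2 / ν) ^ (-(ν - 1) / 2))
      (-(ν - 1) / ν * x * (1 + x ^ 2 / ν) ^ (-(ν + 1) / 2)) x := by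
    have h := hinner.rpow_const (p := -(ν - 1) / 2) (Or.inl hu.ne')
    convert h using 1
    rw [show -(ν - 1) / 2 - 1 = -(ν + 1) / 2 by ring]
    field_simp
  have hR : HasDerivAt (fun x : ℝ => (((1 + x ^ 2 / ν) ^ (-(ν - 1) / 2) : ℝ) : ℂ))
      ((-(ν - 1) / ν * x * (1 + x ^ 2 / ν) ^ (-(ν + 1) / 2) : ℝ) : ℂ) x :=
    HasDerivAt.ofReal_comp hr
  have hD := (hE.mul hR).const_mul ((sdc ν * ν : ℝ) : ℂ)
  have hA : sdc ν * ν * ((1 + x ^ 2 / ν) ^ (-(ν - 1) / 2)) =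
      (ν + x ^ 2) * studentDensity ν x := by
    rw [studentDensity_eq,
      show -(ν - 1) / 2 = 1 + -(ν + 1) / 2 by ring, Real.rpow_add hu, Real.rpow_one]
    field_simp
  have hB : sdc ν * ν * (-(ν - 1) / ν * x * ((1 + x ^ 2 / ν) ^ (-(ν + 1) / 2))) =
      -((ν - 1) * x * studentDensity ν x) := by
    rw [studentDensity_eq]
    field_simp
  have hAc : ((sdc ν * ν : ℝ) : ℂ) * (((1 + x ^ 2 / ν) ^ (-(ν - 1) / 2) : ℝ) : ℂ) =
      ((ν : ℂ) + (x : ℂ) ^ 2) * (studentDensity ν x : ℂ) := by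
    rw [← Complex.ofReal_mul, hA]
    push_cast
    ring
  have hBc : ((sdc ν * ν : ℝ) : ℂ) *
      ((-(ν - 1) / ν * x * ((1 + x ^ 2 / ν) ^ (-(ν + 1) / 2)) : ℝ) : ℂ) =
      -(((ν : ℂ) - 1) * (x : ℂ) * (studentDensity ν x : ℂ)) := by
    rw [← Complex.ofReal_mul, hB]
    push_cast
    ring
  refine hD.congr_deriv ?_
  symm
  linear_combination (-(Complex.I * t * Complex.exp (Complex.I * t * x))) * hAc
    - Complex.exp (Complex.I * t * x) * hBc

lemma tendsto_gfun {ν : ℝ} (hν : 2 < ν) (t : ℝ) :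
    Filter.Tendsto (gfun ν t) Filter.atTop (nhds 0) ∧
      Filter.Tendsto (gfun ν t) Filter.atBot (nhds 0) := by
  have hν0 : (0:ℝ) < ν := by linarith
  have hnorm : ∀ x : ℝ, ‖gfun ν t x‖ =
      |sdc ν * ν| * (1 + x ^ 2 / ν) ^ (-(ν - 1) / 2) := by
    intro x
    have hu : 0 < 1 + x ^ 2 / ν := by positivity
    simp only [gfun, norm_mul, Complex.norm_real, Real.norm_eq_abs]
    have hexp : ‖Complex.exp (Complex.I * t * x)‖ = 1 := by
      simp [Complex.norm_exp, Complex.mul_re]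
    rw [hexp, one_mul, abs_of_pos (Real.rpow_pos_of_pos hu _), abs_mul]
  have hsq : Filter.Tendsto (fun y : ℝ => 1 + y / ν) Filter.atTop Filter.atTop :=
    Filter.tendsto_atTop_add_const_left _ _ (Filter.Tendsto.atTop_div_const hν0 Filter.tendsto_id)
  have hrpow : Filter.Tendsto (fun u : ℝ => u ^ (-(ν - 1) / 2)) Filter.atTop (nhds 0) := by
    rw [show -(ν - 1) / 2 = -((ν - 1) / 2) by ring]
    exact tendsto_rpow_neg_atTop (by linarith)
  have key : ∀ l : Filter ℝ, Filter.Tendsto (fun x : ℝ => x ^ 2) l Filter.atTop →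
      Filter.Tendsto (gfun ν t) l (nhds 0) := by
    intro l hl
    rw [tendsto_zero_iff_norm_tendsto_zero]
    have := (hrpow.comp (hsq.comp hl)).const_mul |sdc ν * ν|
    simp only [Function.comp_def, mul_zero] at this
    exact Filter.Tendsto.congr (fun x => (hnorm x).symm) this
  constructor
  · exact key _ (Filter.tendsto_pow_atTop two_ne_zero)
  · refine key _ ?_
    have habs : Filter.Tendsto (fun x : ℝ => |x|) Filter.atBot Filter.atTop :=
      Filter.tendsto_abs_atBot_atTop
    have hsq2 : Filter.Tendsto (fun x : ℝ => |x| ^ 2) Filter.atBot Filter.atTop :=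
      (Filter.tendsto_pow_atTop two_ne_zero).comp habs
    exact hsq2.congr fun x => _root_.sq_abs x

theorem studentCharFun_integral_identity (ν : ℝ) (hν : 2 < ν) (t : ℝ) :
    Integrable (fun x : ℝ => (x : ℂ) ^ 2 * Complex.exp (Complex.I * t * x) *
      (studentDensity ν x : ℂ)) ∧
    Integrable (fun x : ℝ => (x : ℂ) * Complex.exp (Complex.I * t * x) *
      (studentDensity ν x : ℂ)) ∧
    Integrable (fun x : ℝ => Complex.exp (Complex.I * t * x) * (studentDensity ν x : ℂ)) ∧
    -Complex.I * t * (∫ x : ℝ, (x : ℂ) ^ 2 * Complex.exp (Complex.I * t * x) *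
        (studentDensity ν x : ℂ)) +
      (ν - 1) * (∫ x : ℝ, (x : ℂ) * Complex.exp (Complex.I * t * x) *
        (studentDensity ν x : ℂ)) -
      Complex.I * ν * t * (∫ x : ℝ, Complex.exp (Complex.I * t * x) *
        (studentDensity ν x : ℂ)) = 0 := by
  have hI2 : Integrable (fun x : ℝ => (x : ℂ) ^ 2 * Complex.exp (Complex.I * t * x) *
      (studentDensity ν x : ℂ)) := integrable_F hν t (k := 2) le_rfl
  have hI1 : Integrable (fun x : ℝ => (x : ℂ) * Complex.exp (Complex.I * t * x) *
      (studentDensity ν x : ℂ)) := by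
    simpa using integrable_F hν t (k := 1) one_le_two
  have hI0 : Integrable (fun x : ℝ => Complex.exp (Complex.I * t * x) *
      (studentDensity ν x : ℂ)) := by
    simpa using integrable_F hν t (k := 0) (by norm_num)
  refine ⟨hI2, hI1, hI0, ?_⟩
  set F2 : ℝ → ℂ := fun x => (x : ℂ) ^ 2 * Complex.exp (Complex.I * t * x) *
    (studentDensity ν x : ℂ) with hF2
  set F1 : ℝ → ℂ := fun x => (x : ℂ) * Complex.exp (Complex.I * t * x) *
    (studentDensity ν x : ℂ) with hF1
  set F0 : ℝ → ℂ := fun x => Complex.exp (Complex.I * t * x) *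
    (studentDensity ν x : ℂ) with hF0
  set D : ℝ → ℂ := fun x => Complex.I * t * F2 x + Complex.I * ν * t * F0 x
    - (ν - 1) * F1 x with hD
  have hDint : Integrable D :=
    ((hI2.const_mul _).add (hI0.const_mul _)).sub (hI1.const_mul _)
  have hderiv : ∀ x : ℝ, HasDerivAt (gfun ν t) (D x) x := fun x => hasDerivAt_gfun hν t x
  obtain ⟨hTop, hBot⟩ := tendsto_gfun hν t
  have h1 : ∫ x in Set.Iic (0:ℝ), D x = gfun ν t 0 - 0 :=
    integral_Iic_of_hasDerivAt_of_tendsto' (fun x _ => hderiv x) hDint.integrableOn hBot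
  have h2 : ∫ x in Set.Ioi (0:ℝ), D x = 0 - gfun ν t 0 :=
    integral_Ioi_of_hasDerivAt_of_tendsto' (fun x _ => hderiv x) hDint.integrableOn hTop
  have h3 : ∫ x : ℝ, D x = 0 := by
    rw [← intervalIntegral.integral_Iic_add_Ioi hDint.integrableOn hDint.integrableOn, h1, h2]
    ring
  simp only [hD] at h3
  have ha : Integrable (fun x : ℝ => Complex.I * t * F2 x + Complex.I * ν * t * F0 x) :=
    (hI2.const_mul _).add (hI0.const_mul _)
  have hb : Integrable (fun x : ℝ => ((ν : ℂ) - 1) * F1 x) := hI1.const_mul _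
  rw [integral_sub ha hb, integral_add (hI2.const_mul _) (hI0.const_mul _),
    integral_const_mul, integral_const_mul, integral_const_mul] at h3
  linear_combination -h3
end

section
/- Let ν > 2 and let φ_ν(t) = ∫_{-∞}^{∞} e^{itx} f_ν(x) dx be the characteristic function of the Student's t distribution with ν degrees of freedom. Then φ_ν is twice differentiable on ℝ and satisfies the second-order ODE t · φ_ν″(t) − (ν − 1) · φ_ν′(t) − ν t · φ_ν(t) = 0 for every t ∈ ℝ. -/
open MeasureTheory Real Complex Filter Metric Topology

/-- The characteristic function of the Student's t distribution. -/
noncomputable def studentCharFun (ν : ℝ) (t : ℝ) : ℂ :=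
  ∫ x : ℝ, Complex.exp (Complex.I * t * x) * (studentDensity ν x : ℂ)

namespace StudentODE

/-- The normalizing constant. -/
noncomputable def Cst (ν : ℝ) : ℝ :=
  Real.Gamma ((ν + 1) / 2) / (Real.sqrt (Real.pi * ν) * Real.Gamma (ν / 2))

lemma density_def (ν x : ℝ) :
    studentDensity ν x = Cst ν * (1 + x ^ 2 / ν) ^ (-(ν + 1) / 2) := rfl

variable {ν : ℝ}

lemma Cst_pos (hν : 2 < ν) : 0 < Cst ν := by
  have h0 : (0:ℝ) < ν := by linarith
  exact div_pos (Real.Gamma_pos_of_pos (by linarith))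
    (mul_pos (Real.sqrt_pos.2 (by positivity)) (Real.Gamma_pos_of_pos (by linarith)))

lemma base_pos (hν : 0 < ν) (x : ℝ) : 0 < 1 + x ^ 2 / ν := by positivity

lemma density_nonneg (hν : 2 < ν) (x : ℝ) : 0 ≤ studentDensity ν x := by
  rw [density_def]
  exact mul_nonneg (Cst_pos hν).le (Real.rpow_nonneg (base_pos (by linarith) x).le _)

lemma continuous_density (hν : 2 < ν) : Continuous (studentDensity ν) := by
  have h0 : (0:ℝ) < ν := by linarith
  have hfun : studentDensity ν = fun x : ℝ => Cst ν * (1 + x ^ 2 / ν) ^ (-(ν + 1) / 2) := rfl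
  rw [hfun]
  refine continuous_const.mul (Continuous.rpow_const ?_ fun x => Or.inl (base_pos h0 x).ne')
  exact continuous_const.add ((continuous_pow 2).div_const ν)

lemma hasDerivAt_density (hν : 2 < ν) (x : ℝ) :
    HasDerivAt (studentDensity ν)
      (-(ν + 1) * x * studentDensity ν x / (ν + x ^ 2)) x := by
  have h0 : (0:ℝ) < ν := by linarith
  have hb := base_pos h0 x
  have h1 : HasDerivAt (fun x : ℝ => 1 + x ^ 2 / ν) (2 * x / ν) x := by
    simpa using ((hasDerivAt_pow 2 x).div_const ν).const_add 1
  have h2 := (h1.rpow_const (p := -(ν + 1) / 2) (Or.inl hb.ne')).const_mul (Cst ν)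
  have hfun : studentDensity ν = fun x : ℝ => Cst ν * (1 + x ^ 2 / ν) ^ (-(ν + 1) / 2) := by
    funext y; exact density_def ν y
  rw [hfun]
  refine h2.congr_deriv ?_
  symm
  have hsum : ν + x ^ 2 = ν * (1 + x ^ 2 / ν) := by field_simp
  rw [show -(ν + 1) / 2 - 1 = -(ν + 1) / 2 + (-1) by ring, Real.rpow_add hb,
    Real.rpow_neg_one, hsum]
  field_simp

lemma density_aux_bound (hν : 2 < ν) {k : ℕ} (hk : k ≤ 2) (x : ℝ) :
    |x| ^ k * studentDensity ν x ≤
      Cst ν * ((2 * max ν 1) ^ ((ν + 1) / 2) * (1 + |x|) ^ (-(ν - 1))) := by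
  have h0 : (0:ℝ) < ν := by linarith
  have hb := base_pos h0 x
  set m := max ν 1 with hm
  have hm1 : (1:ℝ) ≤ m := le_max_right _ _
  have hmν : ν ≤ m := le_max_left _ _
  have hmpos : (0:ℝ) < m := by linarith
  have hxpos : (0:ℝ) < 1 + |x| := by positivity
  -- step 1 : (1+|x|)^2 ≤ 2m(1+x²/ν)
  have key : x ^ 2 ≤ m * (x ^ 2 / ν) := by
    have h1 : (1:ℝ) ≤ m / ν := (one_le_div h0).2 hmν
    have h2 : m * (x ^ 2 / ν) = m / ν * x ^ 2 := by ring
    nlinarith [sq_nonneg x]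
  have step1 : (1 + |x|) ^ 2 ≤ 2 * m * (1 + x ^ 2 / ν) := by
    have h3 : 2 * m * (1 + x ^ 2 / ν) = 2 * m + 2 * (m * (x ^ 2 / ν)) := by ring
    nlinarith [_root_.sq_abs x, sq_nonneg (1 - |x|), abs_nonneg x]
  -- step 2 : monotonicity of rpow with nonpositive exponent
  have step2 : (1 + x ^ 2 / ν) ^ (-(ν + 1) / 2) ≤
      ((1 + |x|) ^ 2 / (2 * m)) ^ (-(ν + 1) / 2) := by
    refine Real.rpow_le_rpow_of_nonpos (by positivity) ?_ (by linarith)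
    rw [div_le_iff₀ (by positivity)]
    nlinarith
  -- step 3 : rewrite the bound
  have step3 : ((1 + |x|) ^ 2 / (2 * m)) ^ (-(ν + 1) / 2) =
      (2 * m) ^ ((ν + 1) / 2) * (1 + |x|) ^ (-(ν + 1)) := by
    rw [Real.div_rpow (by positivity) (by positivity)]
    rw [← Real.rpow_natCast (1 + |x|) 2, ← Real.rpow_mul hxpos.le]
    rw [show ((2:ℕ):ℝ) * (-(ν + 1) / 2) = -(ν + 1) by push_cast; ring]
    rw [div_eq_mul_inv, ← Real.rpow_neg (by positivity : (0:ℝ) ≤ 2 * m)]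
    rw [show -(-(ν + 1) / 2) = (ν + 1) / 2 by ring]
    ring
  -- step 4 : absorb |x|^k
  have step4 : |x| ^ k * (1 + |x|) ^ (-(ν + 1)) ≤ (1 + |x|) ^ (-(ν - 1)) := by
    have h5 : |x| ^ k ≤ (1 + |x|) ^ k :=
      pow_le_pow_left₀ (abs_nonneg x) (by linarith [abs_nonneg x]) k
    have h6 : (1 + |x|) ^ k * (1 + |x|) ^ (-(ν + 1)) = (1 + |x|) ^ ((k : ℝ) - (ν + 1)) := by
      rw [← Real.rpow_natCast (1 + |x|) k, ← Real.rpow_add hxpos]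
      ring_nf
    have h7 : (1 + |x|) ^ ((k : ℝ) - (ν + 1)) ≤ (1 + |x|) ^ (-(ν - 1)) := by
      refine Real.rpow_le_rpow_of_exponent_le (by linarith [abs_nonneg x]) ?_
      have : (k : ℝ) ≤ 2 := by exact_mod_cast hk
      linarith
    calc |x| ^ k * (1 + |x|) ^ (-(ν + 1))
        ≤ (1 + |x|) ^ k * (1 + |x|) ^ (-(ν + 1)) := by
          exact mul_le_mul_of_nonneg_right h5 (Real.rpow_nonneg hxpos.le _)
      _ = (1 + |x|) ^ ((k : ℝ) - (ν + 1)) := h6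
      _ ≤ (1 + |x|) ^ (-(ν - 1)) := h7
  -- combine
  rw [density_def]
  calc |x| ^ k * (Cst ν * (1 + x ^ 2 / ν) ^ (-(ν + 1) / 2))
      = Cst ν * (|x| ^ k * (1 + x ^ 2 / ν) ^ (-(ν + 1) / 2)) := by ring
    _ ≤ Cst ν * (|x| ^ k * ((2 * m) ^ ((ν + 1) / 2) * (1 + |x|) ^ (-(ν + 1)))) := by
        refine mul_le_mul_of_nonneg_left ?_ (Cst_pos hν).le
        refine mul_le_mul_of_nonneg_left ?_ (pow_nonneg (abs_nonneg x) k)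
        rw [← step3]; exact step2
    _ = Cst ν * ((2 * m) ^ ((ν + 1) / 2) * (|x| ^ k * (1 + |x|) ^ (-(ν + 1)))) := by ring
    _ ≤ Cst ν * ((2 * m) ^ ((ν + 1) / 2) * (1 + |x|) ^ (-(ν - 1))) := by
        refine mul_le_mul_of_nonneg_left ?_ (Cst_pos hν).le
        exact mul_le_mul_of_nonneg_left step4 (Real.rpow_nonneg (by positivity) _)

lemma integrable_pow_mul_density (hν : 2 < ν) {k : ℕ} (hk : k ≤ 2) :
    Integrable (fun x : ℝ => |x| ^ k * studentDensity ν x) := by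
  have h1 : ((Module.finrank ℝ ℝ : ℝ)) < ν - 1 := by
    simp only [Module.finrank_self, Nat.cast_one]; linarith
  have hint : Integrable (fun x : ℝ => (1 + ‖x‖) ^ (-(ν - 1))) :=
    integrable_one_add_norm h1
  refine ((hint.const_mul (Cst ν * (2 * max ν 1) ^ ((ν + 1) / 2))).mono' ?_ ?_)
  · exact ((_root_.continuous_abs.pow k).mul (continuous_density hν)).aestronglyMeasurable
  · filter_upwards with x
    rw [Real.norm_of_nonneg
      (mul_nonneg (pow_nonneg (abs_nonneg x) k) (density_nonneg hν x))]
    have := density_aux_bound hν hk x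
    simpa [Real.norm_eq_abs, mul_assoc] using this

/-- The integrand of the characteristic function. -/
noncomputable def Fc (ν t x : ℝ) : ℂ :=
  Complex.exp (Complex.I * t * x) * (studentDensity ν x : ℂ)

lemma charFun_eq (ν t : ℝ) : studentCharFun ν t = ∫ x : ℝ, Fc ν t x := rfl

lemma norm_exp_I_mul (t x : ℝ) : ‖Complex.exp (Complex.I * t * x)‖ = 1 := by
  rw [show Complex.I * (t:ℂ) * (x:ℂ) = ((t * x : ℝ) : ℂ) * Complex.I by push_cast; ring,
    Complex.norm_exp_ofReal_mul_I]

lemma norm_Fc (hν : 2 < ν) (t x : ℝ) : ‖Fc ν t x‖ = studentDensity ν x := by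
  rw [Fc, norm_mul, norm_exp_I_mul, one_mul, Complex.norm_real,
    Real.norm_of_nonneg (density_nonneg hν x)]

lemma continuous_Fc (hν : 2 < ν) (t : ℝ) : Continuous (Fc ν t) := by
  refine Continuous.mul ?_ (Complex.continuous_ofReal.comp (continuous_density hν))
  exact Complex.continuous_exp.comp (continuous_const.mul Complex.continuous_ofReal)

lemma integrable_Fc_aux (hν : 2 < ν) (t : ℝ) {k : ℕ} (hk : k ≤ 2) :
    Integrable (fun x : ℝ => (x : ℂ) ^ k * Fc ν t x) := by
  refine (integrable_pow_mul_density hν hk).mono' ?_ ?_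
  · exact ((Complex.continuous_ofReal.pow k).mul (continuous_Fc hν t)).aestronglyMeasurable
  · filter_upwards with x
    rw [norm_mul, norm_pow, Complex.norm_real, Real.norm_eq_abs, norm_Fc hν]

lemma integrable_Fc (hν : 2 < ν) (t : ℝ) : Integrable (Fc ν t) := by
  simpa using integrable_Fc_aux hν t (k := 0) (by norm_num)

lemma integrable_X_mul_Fc (hν : 2 < ν) (t : ℝ) :
    Integrable (fun x : ℝ => (x : ℂ) * Fc ν t x) := by
  simpa using integrable_Fc_aux hν t (k := 1) (by norm_num)

lemma integrable_X_sq_mul_Fc (hν : 2 < ν) (t : ℝ) :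
    Integrable (fun x : ℝ => (x : ℂ) ^ 2 * Fc ν t x) :=
  integrable_Fc_aux hν t (k := 2) le_rfl

lemma integrable_I_mul_Fc (hν : 2 < ν) (t : ℝ) :
    Integrable (fun x : ℝ => Complex.I * x * Fc ν t x) := by
  refine ((integrable_X_mul_Fc hν t).const_mul Complex.I).congr
    (Filter.Eventually.of_forall fun x => ?_)
  ring

lemma hasDerivAt_Fc (hν : 2 < ν) (t x : ℝ) :
    HasDerivAt (fun s : ℝ => Fc ν s x) (Complex.I * x * Fc ν t x) t := by
  have h0 : HasDerivAt (fun z : ℂ => Complex.I * z * (x:ℂ)) (Complex.I * x) (t:ℂ) := by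
    simpa using ((hasDerivAt_id ((t:ℝ):ℂ)).const_mul Complex.I).mul_const (x:ℂ)
  have h1 : HasDerivAt (fun z : ℂ => Complex.exp (Complex.I * z * x))
      (Complex.I * x * Complex.exp (Complex.I * (t:ℂ) * x)) (t:ℂ) := by
    simpa [mul_comm] using h0.cexp
  have h2 := (h1.comp_ofReal).mul_const ((studentDensity ν x : ℝ) : ℂ)
  simpa [Fc, mul_assoc] using h2

lemma hasDerivAt_charFun (hν : 2 < ν) (t : ℝ) :
    HasDerivAt (studentCharFun ν) (∫ x : ℝ, Complex.I * x * Fc ν t x) t := by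
  have key := hasDerivAt_integral_of_dominated_loc_of_deriv_le
    (F := fun s (x : ℝ) => Fc ν s x)
    (F' := fun s (x : ℝ) => Complex.I * x * Fc ν s x)
    (x₀ := t) (bound := fun x : ℝ => |x| ^ 1 * studentDensity ν x)
    (s := Set.univ) Filter.univ_mem
    (Filter.Eventually.of_forall fun s => (continuous_Fc hν s).aestronglyMeasurable)
    (integrable_Fc hν t)
    ((((continuous_const.mul Complex.continuous_ofReal)).mul
      (continuous_Fc hν t)).aestronglyMeasurable)
    ?_ (integrable_pow_mul_density hν (by norm_num))
    (Filter.Eventually.of_forall fun x s _ => hasDerivAt_Fc hν s x)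
  · exact key.2
  · filter_upwards with x s _
    simp only [norm_mul, Complex.norm_I, one_mul, Complex.norm_real, Real.norm_eq_abs,
      norm_Fc hν]
    apply le_of_eq; ring

lemma hasDerivAt_deriv_charFun (hν : 2 < ν) (t : ℝ) :
    HasDerivAt (fun s : ℝ => ∫ x : ℝ, Complex.I * x * Fc ν s x)
      (∫ x : ℝ, Complex.I * x * (Complex.I * x * Fc ν t x)) t := by
  have key := hasDerivAt_integral_of_dominated_loc_of_deriv_le
    (F := fun s (x : ℝ) => Complex.I * x * Fc ν s x)
    (F' := fun s (x : ℝ) => Complex.I * x * (Complex.I * x * Fc ν s x))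
    (x₀ := t) (bound := fun x : ℝ => |x| ^ 2 * studentDensity ν x)
    (s := Set.univ) Filter.univ_mem
    (Filter.Eventually.of_forall fun s =>
      (((continuous_const.mul Complex.continuous_ofReal)).mul
        (continuous_Fc hν s)).aestronglyMeasurable)
    (integrable_I_mul_Fc hν t)
    ((((continuous_const.mul Complex.continuous_ofReal)).mul
      (((continuous_const.mul Complex.continuous_ofReal)).mul
        (continuous_Fc hν t))).aestronglyMeasurable)
    ?_ (integrable_pow_mul_density hν le_rfl)
    (Filter.Eventually.of_forall fun x s _ =>
      (hasDerivAt_Fc hν s x).const_mul (Complex.I * x))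
  · exact key.2
  · filter_upwards with x s _
    simp only [norm_mul, Complex.norm_I, one_mul, Complex.norm_real, Real.norm_eq_abs,
      norm_Fc hν]
    apply le_of_eq; ring

end StudentODE

open StudentODE

theorem studentCharFun_ode (ν : ℝ) (hν : 2 < ν) :
    Differentiable ℝ (studentCharFun ν) ∧
    Differentiable ℝ (deriv (studentCharFun ν)) ∧
    ∀ t : ℝ, (t : ℂ) * deriv (deriv (studentCharFun ν)) t -
      (ν - 1) * deriv (studentCharFun ν) t - ν * t * studentCharFun ν t = 0 := by
  have h0 : (0:ℝ) < ν := by linarith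
  have hd1 : ∀ t : ℝ, HasDerivAt (studentCharFun ν) (∫ x : ℝ, Complex.I * x * Fc ν t x) t :=
    hasDerivAt_charFun hν
  have hderiv1 : deriv (studentCharFun ν) =
      fun t : ℝ => ∫ x : ℝ, Complex.I * x * Fc ν t x :=
    funext fun t => (hd1 t).deriv
  have hd2 : ∀ t : ℝ, HasDerivAt (deriv (studentCharFun ν))
      (∫ x : ℝ, Complex.I * x * (Complex.I * x * Fc ν t x)) t := by
    intro t
    rw [hderiv1]
    exact hasDerivAt_deriv_charFun hν t
  have hderiv2 : deriv (deriv (studentCharFun ν)) =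
      fun t : ℝ => ∫ x : ℝ, Complex.I * x * (Complex.I * x * Fc ν t x) :=
    funext fun t => (hd2 t).deriv
  refine ⟨fun t => (hd1 t).differentiableAt, fun t => (hd2 t).differentiableAt, ?_⟩
  intro t
  -- notation
  set J1 : ℂ := ∫ x : ℝ, (x : ℂ) * Fc ν t x with hJ1
  set J2 : ℂ := ∫ x : ℝ, (x : ℂ) ^ 2 * Fc ν t x with hJ2
  have hsq : ∀ (x : ℝ) (z : ℂ), Complex.I * x * (Complex.I * x * z) = -((x:ℂ) ^ 2 * z) := by
    intro x z
    linear_combination ((x:ℂ) * x * z) * Complex.I_mul_I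
  have e1 : deriv (studentCharFun ν) t = Complex.I * J1 := by
    rw [hderiv1]
    simp only [hJ1]
    rw [← integral_const_mul]
    congr 1; funext x; ring
  have e2 : deriv (deriv (studentCharFun ν)) t = -J2 := by
    rw [hderiv2]
    simp only [hJ2]
    rw [← integral_neg]
    congr 1; funext x; exact hsq x (Fc ν t x)
  -- the boundary-term function
  set G : ℝ → ℂ := fun x => Complex.exp (Complex.I * t * x) * ((ν:ℂ) + (x:ℂ) ^ 2) *
    (studentDensity ν x : ℂ) with hG
  set G' : ℝ → ℂ := fun x => (Complex.I * t * ν) * Fc ν t x +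
    (Complex.I * t) * ((x:ℂ) ^ 2 * Fc ν t x) + ((1:ℂ) - ν) * ((x:ℂ) * Fc ν t x) with hG'
  have hGder : ∀ x : ℝ, HasDerivAt G (G' x) x := by
    intro x
    have hA : HasDerivAt (fun x : ℝ => Complex.exp (Complex.I * t * x))
        (Complex.I * t * Complex.exp (Complex.I * t * x)) x := by
      have ha : HasDerivAt (fun z : ℂ => Complex.I * (t:ℂ) * z) (Complex.I * t) ((x:ℝ):ℂ) :=
        by simpa using (hasDerivAt_id ((x:ℝ):ℂ)).const_mul (Complex.I * (t:ℂ))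
      have hb : HasDerivAt (fun z : ℂ => Complex.exp (Complex.I * t * z))
          (Complex.I * t * Complex.exp (Complex.I * t * x)) ((x:ℝ):ℂ) := by
        simpa [mul_comm] using ha.cexp
      exact hb.comp_ofReal
    have hB : HasDerivAt (fun x : ℝ => (ν:ℂ) + (x:ℂ) ^ 2) (2 * x) x := by
      have : HasDerivAt (fun z : ℂ => (ν:ℂ) + z ^ 2) (2 * (x:ℂ)) ((x:ℝ):ℂ) := by
        simpa using (hasDerivAt_pow 2 ((x:ℝ):ℂ)).const_add (ν:ℂ)
      exact this.comp_ofReal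
    have hD : HasDerivAt (fun x : ℝ => ((studentDensity ν x : ℝ) : ℂ))
        ((( -(ν + 1) * x * studentDensity ν x / (ν + x ^ 2) : ℝ)) : ℂ) x :=
      (hasDerivAt_density hν x).ofReal_comp
    have total := (hA.mul hB).mul hD
    have hkey : ((ν:ℂ) + (x:ℂ) ^ 2) *
        ((( -(ν + 1) * x * studentDensity ν x / (ν + x ^ 2) : ℝ)) : ℂ) =
        -((ν:ℂ) + 1) * x * (studentDensity ν x : ℂ) := by
      have hne : (ν + x ^ 2 : ℝ) ≠ 0 := by positivity
      have hr : (ν + x ^ 2) * (-(ν + 1) * x * studentDensity ν x / (ν + x ^ 2)) =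
          -(ν + 1) * x * studentDensity ν x := by field_simp
      calc ((ν:ℂ) + (x:ℂ) ^ 2) * ((( -(ν + 1) * x * studentDensity ν x / (ν + x ^ 2) : ℝ)) : ℂ)
          = (((ν + x ^ 2 : ℝ)) : ℂ) *
            ((( -(ν + 1) * x * studentDensity ν x / (ν + x ^ 2) : ℝ)) : ℂ) := by push_cast; ring
        _ = (((ν + x ^ 2) * (-(ν + 1) * x * studentDensity ν x / (ν + x ^ 2)) : ℝ) : ℂ) := by
            push_cast; ring
        _ = ((-(ν + 1) * x * studentDensity ν x : ℝ) : ℂ) := by rw [hr]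
        _ = -((ν:ℂ) + 1) * x * (studentDensity ν x : ℂ) := by push_cast; ring
    refine total.congr_deriv ?_
    symm
    simp only [hG', Fc, Pi.mul_apply]
    linear_combination (-(Complex.exp (Complex.I * t * x))) * hkey
  have hGint : Integrable G' := by
    have := (((integrable_Fc hν t).const_mul (Complex.I * t * ν)).add
      ((integrable_X_sq_mul_Fc hν t).const_mul (Complex.I * t))).add
      ((integrable_X_mul_Fc hν t).const_mul ((1:ℂ) - ν))
    exact this
  -- limits of G at ±∞
  have hnormG : ∀ x : ℝ, ‖G x‖ =
      ν * Cst ν * (1 + x ^ 2 / ν) ^ (1 + -(ν + 1) / 2) := by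
    intro x
    have hb := base_pos h0 x
    have hsum : ν + x ^ 2 = ν * (1 + x ^ 2 / ν) := by field_simp
    simp only [hG]
    rw [norm_mul, norm_mul, norm_exp_I_mul, one_mul,
      show ((ν:ℂ) + (x:ℂ) ^ 2) = (((ν + x ^ 2 : ℝ)) : ℂ) by push_cast; ring,
      Complex.norm_real, Real.norm_of_nonneg (by positivity : (0:ℝ) ≤ ν + x ^ 2),
      Complex.norm_real, Real.norm_of_nonneg (density_nonneg hν x), density_def,
      Real.rpow_add hb, Real.rpow_one, hsum]
    ring
  have hqlim : Tendsto (fun y : ℝ => y ^ (1 + -(ν + 1) / 2)) atTop (𝓝 0) := by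
    have h2 : (fun y : ℝ => y ^ (1 + -(ν + 1) / 2)) = fun y : ℝ => y ^ (-((ν - 1) / 2)) := by
      funext y; congr 1; ring
    rw [h2]
    exact tendsto_rpow_neg_atTop (by linarith)
  have hu_top : Tendsto (fun x : ℝ => 1 + x ^ 2 / ν) atTop atTop :=
    tendsto_atTop_add_const_left _ 1
      (((tendsto_pow_atTop (two_ne_zero)).atTop_div_const h0))
  have hu_bot : Tendsto (fun x : ℝ => 1 + x ^ 2 / ν) atBot atTop := by
    refine tendsto_atTop_add_const_left _ 1 (Tendsto.atTop_div_const h0 ?_)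
    have hneg : Tendsto (fun x : ℝ => (-x) ^ 2) atBot atTop :=
      (tendsto_pow_atTop (two_ne_zero)).comp tendsto_neg_atBot_atTop
    exact hneg.congr fun x => by ring
  have htop : Tendsto G atTop (𝓝 0) := by
    refine squeeze_zero_norm (fun x => (hnormG x).le) ?_
    simpa using (hqlim.comp hu_top).const_mul (ν * Cst ν)
  have hbot : Tendsto G atBot (𝓝 0) := by
    refine squeeze_zero_norm (fun x => (hnormG x).le) ?_
    simpa using (hqlim.comp hu_bot).const_mul (ν * Cst ν)
  -- FTC on the two half-lines
  have hIic : ∫ x in Set.Iic (0:ℝ), G' x = G 0 - 0 :=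
    integral_Iic_of_hasDerivAt_of_tendsto' (fun x _ => hGder x) hGint.integrableOn hbot
  have hIoi : ∫ x in Set.Ioi (0:ℝ), G' x = 0 - G 0 :=
    integral_Ioi_of_hasDerivAt_of_tendsto' (fun x _ => hGder x) hGint.integrableOn htop
  have hzero : (∫ x : ℝ, G' x) = 0 := by
    rw [← intervalIntegral.integral_Iic_add_Ioi hGint.integrableOn hGint.integrableOn, hIic, hIoi]
    ring
  have hexp : (∫ x : ℝ, G' x) = (Complex.I * t * ν) * studentCharFun ν t +
      (Complex.I * t) * J2 + ((1:ℂ) - ν) * J1 := by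
    have i1 : Integrable (fun x : ℝ => (Complex.I * t * ν) * Fc ν t x) :=
      (integrable_Fc hν t).const_mul _
    have i2 : Integrable (fun x : ℝ => (Complex.I * t) * ((x:ℂ) ^ 2 * Fc ν t x)) :=
      (integrable_X_sq_mul_Fc hν t).const_mul _
    have i3 : Integrable (fun x : ℝ => ((1:ℂ) - ν) * ((x:ℂ) * Fc ν t x)) :=
      (integrable_X_mul_Fc hν t).const_mul _
    have i12 : Integrable (fun x : ℝ => (Complex.I * t * ν) * Fc ν t x +
        (Complex.I * t) * ((x:ℂ) ^ 2 * Fc ν t x)) := i1.add i2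
    simp only [hG']
    rw [integral_add i12 i3, integral_add i1 i2,
      integral_const_mul, integral_const_mul, integral_const_mul]
    rw [charFun_eq]
  have E : (Complex.I * t * ν) * studentCharFun ν t + (Complex.I * t) * J2 +
      ((1:ℂ) - ν) * J1 = 0 := by rw [← hexp]; exact hzero
  rw [e1, e2]
  linear_combination Complex.I * E -
    ((t:ℂ) * J2 + (t:ℂ) * (ν:ℂ) * studentCharFun ν t) * Complex.I_mul_I
end

section
/- For every ν > 0 and every t > 0, the characteristic function of the Student's t distribution with ν degrees of freedom satisfies the recursion ∫_{-∞}^{∞} e^{itx} f_ν(x) dx = −(i/t) · √(ν/(ν+2)) · ∫_{-∞}^{∞} y · e^{i t √(ν/(ν+2)) · y} f_{ν+2}(y) dy, where the right-hand integral converges absolutely. -/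
open MeasureTheory Real Complex Filter Topology

lemma integrable_core (a p k : ℝ) (ha : 0 < a) (hk : 0 ≤ k) (hp : k + 1 < 2 * p) :
    Integrable (fun x : ℝ => (1 + |x|) ^ k * (1 + x ^ 2 / a) ^ (-p)) := by
  have hp0 : 0 ≤ p := by nlinarith
  have hbase : ∀ x : ℝ, (0:ℝ) < 1 + x ^ 2 / a := fun x => by positivity
  have habs : ∀ x : ℝ, (0:ℝ) < 1 + |x| := fun x => by positivity
  set C : ℝ := 2 * max 1 a with hC
  have hC1 : (1:ℝ) ≤ C := by
    have := le_max_left 1 a; simp only [hC]; nlinarith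
  have hineq : ∀ x : ℝ, (1 + |x|) ^ 2 ≤ C * (1 + x ^ 2 / a) := by
    intro x
    have h1 : x ^ 2 / a * a = x ^ 2 := div_mul_cancel₀ _ ha.ne'
    have h2 : x ^ 2 ≤ max 1 a * (x ^ 2 / a) := by
      calc x ^ 2 = (x ^ 2 / a) * a := h1.symm
        _ ≤ (x ^ 2 / a) * max 1 a :=
            mul_le_mul_of_nonneg_left (le_max_right 1 a) (by positivity)
        _ = max 1 a * (x ^ 2 / a) := mul_comm _ _
    have h3 : 2 * |x| ≤ 1 + x ^ 2 := by nlinarith [_root_.sq_abs x, sq_nonneg (|x| - 1)]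
    have h4 : (1:ℝ) ≤ max 1 a := le_max_left 1 a
    have h5 := _root_.sq_abs x
    simp only [hC]
    nlinarith [sq_nonneg x, div_nonneg (sq_nonneg x) ha.le]
  have hbnd : ∀ x : ℝ, (1 + |x|) ^ k * (1 + x ^ 2 / a) ^ (-p)
      ≤ C ^ p * (1 + ‖x‖) ^ (-(2 * p - k)) := by
    intro x
    have hx := habs x
    have hb := hbase x
    have key : (1 + |x|) ^ (2 * p) ≤ C ^ p * (1 + x ^ 2 / a) ^ p := by
      have h2 : (1 + |x|) ^ (2 * p) = (((1 + |x|) ^ 2 : ℝ)) ^ p := by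
        rw [← Real.rpow_natCast (1 + |x|) 2, ← Real.rpow_mul hx.le]; norm_num
      rw [h2, ← Real.mul_rpow (by positivity) hb.le]
      exact Real.rpow_le_rpow (by positivity) (hineq x) hp0
    have key2 : (1 + x ^ 2 / a) ^ (-p) ≤ C ^ p * (1 + |x|) ^ (-(2 * p)) := by
      have hA : (0:ℝ) < (1 + x ^ 2 / a) ^ p := Real.rpow_pos_of_pos hb p
      have hB : (0:ℝ) < (1 + |x|) ^ (2 * p) := Real.rpow_pos_of_pos hx _
      rw [Real.rpow_neg hb.le, Real.rpow_neg hx.le, ← one_div, ← one_div, mul_one_div,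
        div_le_div_iff₀ hA hB, one_mul]
      linarith [key]
    calc (1 + |x|) ^ k * (1 + x ^ 2 / a) ^ (-p)
        ≤ (1 + |x|) ^ k * (C ^ p * (1 + |x|) ^ (-(2 * p))) :=
          mul_le_mul_of_nonneg_left key2 (by positivity)
      _ = C ^ p * (1 + ‖x‖) ^ (-(2 * p - k)) := by
          simp only [Real.norm_eq_abs]
          rw [show -(2*p-k) = k + (-(2*p)) by ring, Real.rpow_add (habs x)]
          ring
  have hint : Integrable (fun x : ℝ => C ^ p * (1 + ‖x‖) ^ (-(2 * p - k))) := by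
    apply Integrable.const_mul
    apply integrable_one_add_norm (E := ℝ)
    simp only [Module.finrank_self]
    push_cast; linarith
  apply hint.mono'
  · apply Continuous.aestronglyMeasurable
    apply Continuous.mul
    · exact (continuous_const.add _root_.continuous_abs).rpow_const (fun x => Or.inl (habs x).ne')
    · exact (continuous_const.add ((continuous_pow 2).div_const a)).rpow_const
        (fun x => Or.inl (hbase x).ne')
  · refine Filter.Eventually.of_forall (fun x => ?_)
    simp only [Real.norm_eq_abs]
    rw [_root_.abs_of_nonneg (by positivity)]
    exact hbnd x

lemma integrable_pow0 (a p : ℝ) (ha : 0 < a) (hp : 1 < 2 * p) :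
    Integrable (fun x : ℝ => (1 + x ^ 2 / a) ^ (-p)) := by
  have h := integrable_core a p 0 ha le_rfl (by linarith)
  simpa [Real.rpow_zero] using h

lemma integrable_pow1 (a p : ℝ) (ha : 0 < a) (hp : 1 < p) :
    Integrable (fun x : ℝ => |x| * (1 + x ^ 2 / a) ^ (-p)) := by
  have h := integrable_core a p 1 ha zero_le_one (by linarith)
  apply h.mono'
  · apply Continuous.aestronglyMeasurable
    exact _root_.continuous_abs.mul
      ((continuous_const.add ((continuous_pow 2).div_const a)).rpow_const
        (fun x => Or.inl (by simp only [Pi.add_apply]; positivity)))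
  · refine Eventually.of_forall (fun x => ?_)
    have hb : (0:ℝ) < 1 + x ^ 2 / a := by positivity
    simp only [Real.norm_eq_abs]
    rw [_root_.abs_of_nonneg (by positivity)]
    have : (1 + |x|) ^ (1:ℝ) = 1 + |x| := Real.rpow_one _
    rw [this]
    apply mul_le_mul_of_nonneg_right _ (Real.rpow_pos_of_pos hb _).le
    linarith [abs_nonneg x]

theorem studentCharFun_recursion (ν : ℝ) (hν : 0 < ν) (t : ℝ) (ht : 0 < t) :
    Integrable (fun y : ℝ => (y : ℂ) *
      Complex.exp (Complex.I * t * Real.sqrt (ν / (ν + 2)) * y) *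
      (studentDensity (ν + 2) y : ℂ)) ∧
    (∫ x : ℝ, Complex.exp (Complex.I * t * x) * (studentDensity ν x : ℂ)) =
      -(Complex.I / t) * Real.sqrt (ν / (ν + 2)) *
        ∫ y : ℝ, (y : ℂ) * Complex.exp (Complex.I * t * Real.sqrt (ν / (ν + 2)) * y) *
          (studentDensity (ν + 2) y : ℂ) := by
  have hν2 : (0:ℝ) < ν + 2 := by linarith
  set s : ℝ := Real.sqrt (ν / (ν + 2)) with hs_def
  have hs_pos : 0 < s := Real.sqrt_pos.2 (by positivity)
  have hs2 : s ^ 2 = ν / (ν + 2) := Real.sq_sqrt (by positivity)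
  set C : ℝ := Real.Gamma ((ν + 1) / 2) / (Real.sqrt (Real.pi * ν) * Real.Gamma (ν / 2))
    with hC_def
  set C' : ℝ := Real.Gamma ((ν + 2 + 1) / 2) /
      (Real.sqrt (Real.pi * (ν + 2)) * Real.Gamma ((ν + 2) / 2)) with hC'_def
  have hC_pos : 0 < C :=
    div_pos (Real.Gamma_pos_of_pos (by linarith))
      (mul_pos (Real.sqrt_pos.2 (by positivity)) (Real.Gamma_pos_of_pos (by positivity)))
  have hC'_pos : 0 < C' :=
    div_pos (Real.Gamma_pos_of_pos (by linarith))
      (mul_pos (Real.sqrt_pos.2 (by positivity)) (Real.Gamma_pos_of_pos (by positivity)))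
  -- constant identity : C' = C * ((ν+1)/ν) * s
  have hCC : C' = C * ((ν + 1) / ν) * s := by
    have h3 : Real.Gamma ((ν + 2 + 1) / 2) = ((ν + 1) / 2) * Real.Gamma ((ν + 1) / 2) := by
      rw [show (ν + 2 + 1) / 2 = (ν + 1) / 2 + 1 by ring,
        Real.Gamma_add_one (by positivity)]
    have h4 : Real.Gamma ((ν + 2) / 2) = (ν / 2) * Real.Gamma (ν / 2) := by
      rw [show (ν + 2) / 2 = ν / 2 + 1 by ring, Real.Gamma_add_one (by positivity)]
    have h5 : Real.sqrt (Real.pi * ν) = s * Real.sqrt (Real.pi * (ν + 2)) := by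
      rw [hs_def, ← Real.sqrt_mul (by positivity)]
      congr 1
      field_simp
    have hΓ : Real.Gamma (ν / 2) ≠ 0 := (Real.Gamma_pos_of_pos (by positivity)).ne'
    have hsq : Real.sqrt (Real.pi * (ν + 2)) ≠ 0 := (Real.sqrt_pos.2 (by positivity)).ne'
    rw [hC'_def, hC_def, h3, h4, h5]
    field_simp
  -- derivative of the density
  have hder : ∀ x : ℝ, HasDerivAt (studentDensity ν)
      (C * (-(ν + 1) / ν) * x * (1 + x ^ 2 / ν) ^ (-(ν + 3) / 2)) x := by
    intro x
    have hb : (0:ℝ) < 1 + x ^ 2 / ν := by positivity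
    have hu : HasDerivAt (fun x : ℝ => 1 + x ^ 2 / ν) (2 * x / ν) x := by
      simpa using ((hasDerivAt_pow 2 x).div_const ν).const_add 1
    have h1 := (hu.rpow_const (p := -(ν + 1) / 2) (Or.inl hb.ne')).const_mul C
    have heq : C * (2 * x / ν * (-(ν + 1) / 2) * (1 + x ^ 2 / ν) ^ (-(ν + 1) / 2 - 1))
        = C * (-(ν + 1) / ν) * x * (1 + x ^ 2 / ν) ^ (-(ν + 3) / 2) := by
      rw [show -(ν + 1) / 2 - 1 = -(ν + 3) / 2 by ring]
      ring
    rw [heq] at h1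
    exact h1
  set f' : ℝ → ℝ := fun x => C * (-(ν + 1) / ν) * x * (1 + x ^ 2 / ν) ^ (-(ν + 3) / 2)
    with hf'_def
  -- derivative of the complex integrand
  have hg : ∀ x : ℝ, HasDerivAt
      (fun x : ℝ => Complex.exp (Complex.I * t * x) * (studentDensity ν x : ℂ))
      (Complex.I * t * (Complex.exp (Complex.I * t * x) * (studentDensity ν x : ℂ))
        + Complex.exp (Complex.I * t * x) * (f' x : ℂ)) x := by
    intro x
    have h0 : HasDerivAt (fun x : ℝ => (x : ℂ)) 1 x := by
      simpa using (hasDerivAt_id x).ofReal_comp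
    have hE : HasDerivAt (fun x : ℝ => Complex.exp (Complex.I * t * x))
        (Complex.I * t * Complex.exp (Complex.I * t * x)) x := by
      have h1 := (h0.const_mul (Complex.I * t)).cexp
      convert h1 using 1
      ring
    have h2 := hE.mul ((hder x).ofReal_comp)
    convert h2 using 1
    case e'_8 => rfl
    case e'_4 => rfl
    rw [show f' x = C * (-(ν + 1) / ν) * x * (1 + x ^ 2 / ν) ^ (-(ν + 3) / 2) from rfl]
    ring
  -- norm of the exponential is 1
  have hexp1 : ∀ u : ℝ, ‖Complex.exp (Complex.I * t * u)‖ = 1 := by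
    intro u
    rw [show Complex.I * t * u = ((t * u : ℝ) : ℂ) * Complex.I by push_cast; ring]
    rw [Complex.norm_exp_ofReal_mul_I]
  have hfc : ∀ a : ℝ, 0 < a → Continuous (studentDensity a) := by
    intro a ha
    unfold studentDensity
    exact continuous_const.mul ((continuous_const.add
      ((continuous_pow 2).div_const a)).rpow_const (fun x => Or.inl (by simp only [Pi.add_apply]; positivity)))
  have hfnn : ∀ x, 0 ≤ studentDensity ν x := by
    intro x
    have h1 : studentDensity ν x = C * (1 + x ^ 2 / ν) ^ (-(ν + 1) / 2) := rfl
    rw [h1]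
    exact mul_nonneg hC_pos.le (Real.rpow_nonneg (by positivity) _)
  have hfnn' : ∀ x, 0 ≤ studentDensity (ν + 2) x := by
    intro x
    have h1 : studentDensity (ν + 2) x = C' * (1 + x ^ 2 / (ν + 2)) ^ (-(ν + 2 + 1) / 2) := rfl
    rw [h1]
    exact mul_nonneg hC'_pos.le (Real.rpow_nonneg (by positivity) _)
  -- integrability of the density
  have hIf : Integrable (studentDensity ν) := by
    have h := (integrable_pow0 ν ((ν + 1) / 2) hν (by linarith)).const_mul C
    have he : (fun x : ℝ => C * (1 + x ^ 2 / ν) ^ (-((ν + 1) / 2))) = studentDensity ν := by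
      funext x
      rw [studentDensity, neg_div]
    rwa [he] at h
  -- integrability of the complex integrand
  have hIg : Integrable
      (fun x : ℝ => Complex.exp (Complex.I * t * x) * (studentDensity ν x : ℂ)) := by
    apply hIf.norm.mono'
    · apply Continuous.aestronglyMeasurable
      exact (Complex.continuous_exp.comp
        (continuous_const.mul Complex.continuous_ofReal)).mul
        (Complex.continuous_ofReal.comp (hfc ν hν))
    · refine Eventually.of_forall fun x => ?_
      rw [norm_mul, hexp1, one_mul, Complex.norm_real]
  -- integrability of exp * f'
  have hId : Integrable (fun x : ℝ => Complex.exp (Complex.I * t * x) * (f' x : ℂ)) := by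
    have h := (integrable_pow1 ν ((ν + 3) / 2) hν (by linarith)).const_mul |C * (-(ν + 1) / ν)|
    apply h.mono'
    · apply Continuous.aestronglyMeasurable
      apply (Complex.continuous_exp.comp
        (continuous_const.mul Complex.continuous_ofReal)).mul
      apply Complex.continuous_ofReal.comp
      exact (continuous_const.mul continuous_id).mul
        ((continuous_const.add ((continuous_pow 2).div_const ν)).rpow_const
          (fun x => Or.inl (by simp only [Pi.add_apply]; positivity)))
    · refine Eventually.of_forall fun x => ?_
      rw [norm_mul, hexp1, one_mul, Complex.norm_real, Real.norm_eq_abs]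
      have hfx : f' x = C * (-(ν + 1) / ν) * x * (1 + x ^ 2 / ν) ^ (-(ν + 3) / 2) := rfl
      rw [hfx]
      have hr : (0:ℝ) ≤ (1 + x ^ 2 / ν) ^ (-(ν + 3) / 2) :=
        Real.rpow_nonneg (by positivity) _
      rw [show -((ν + 3) / 2) = -(ν + 3) / 2 from (neg_div _ _).symm,
        abs_mul, abs_mul, _root_.abs_of_nonneg hr, mul_assoc]
  -- decay of the density at infinity
  have hftop : Tendsto (studentDensity ν) atTop (𝓝 0) := by
    have h1 : Tendsto (fun x : ℝ => 1 + x ^ 2 / ν) atTop atTop := by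
      apply tendsto_atTop_add_const_left
      exact (tendsto_pow_atTop (two_ne_zero)).atTop_div_const hν
    have h2 := (tendsto_rpow_neg_atTop (show (0:ℝ) < (ν + 1) / 2 by linarith)).comp h1
    have h3 := h2.const_mul C
    have he : studentDensity ν = fun x : ℝ => C * (1 + x ^ 2 / ν) ^ (-((ν + 1) / 2)) := by
      funext x
      rw [studentDensity, neg_div]
    rw [he]
    simpa [Function.comp] using h3
  -- boundary term tends to 0
  have hgb : Tendsto (fun R : ℝ =>
      Complex.exp (Complex.I * t * R) * (studentDensity ν R : ℂ)
        - Complex.exp (Complex.I * t * (-R : ℝ)) * (studentDensity ν (-R) : ℂ))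
      atTop (𝓝 0) := by
    refine squeeze_zero_norm (a := fun R => 2 * studentDensity ν R) ?_ ?_
    · intro R
      have he : studentDensity ν (-R) = studentDensity ν R := by
        unfold studentDensity
        rw [show (-R) ^ 2 = R ^ 2 by ring]
      refine (norm_sub_le _ _).trans ?_
      rw [norm_mul, norm_mul, hexp1, hexp1, one_mul, one_mul, Complex.norm_real,
        Complex.norm_real, he]
      simp only [Real.norm_eq_abs]
      rw [_root_.abs_of_nonneg (hfnn R)]
      linarith
    · simpa using hftop.const_mul 2
  -- the integral of the derivative vanishes
  have hIg' : Integrable (fun x : ℝ =>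
      Complex.I * t * (Complex.exp (Complex.I * t * x) * (studentDensity ν x : ℂ))
        + Complex.exp (Complex.I * t * x) * (f' x : ℂ)) :=
    (hIg.const_mul _).add hId
  have hzero : (∫ x : ℝ,
      (Complex.I * t * (Complex.exp (Complex.I * t * x) * (studentDensity ν x : ℂ))
        + Complex.exp (Complex.I * t * x) * (f' x : ℂ))) = 0 := by
    have hlim := intervalIntegral_tendsto_integral hIg' tendsto_neg_atTop_atBot tendsto_id
    have heq : (fun R : ℝ => ∫ x in (-R)..(id R),
        (Complex.I * t * (Complex.exp (Complex.I * t * x) * (studentDensity ν x : ℂ))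
          + Complex.exp (Complex.I * t * x) * (f' x : ℂ)))
        = fun R : ℝ =>
        Complex.exp (Complex.I * t * R) * (studentDensity ν R : ℂ)
          - Complex.exp (Complex.I * t * (-R : ℝ)) * (studentDensity ν (-R) : ℂ) := by
      funext R
      exact intervalIntegral.integral_eq_sub_of_hasDerivAt (fun x _ => hg x)
        hIg'.intervalIntegrable
    rw [heq] at hlim
    exact tendsto_nhds_unique hlim hgb
  -- split the integral
  have hkey : Complex.I * t *
        (∫ x : ℝ, Complex.exp (Complex.I * t * x) * (studentDensity ν x : ℂ))
      + (∫ x : ℝ, Complex.exp (Complex.I * t * x) * (f' x : ℂ)) = 0 := by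
    rw [← integral_const_mul, ← integral_add (hIg.const_mul _) hId]
    exact hzero
  -- the density at ν + 2, rewritten
  have hexp_eq : -(ν + 2 + 1) / 2 = -(ν + 3) / 2 := by ring
  have hsd2 : ∀ y : ℝ, studentDensity (ν + 2) y
      = C' * (1 + y ^ 2 / (ν + 2)) ^ (-(ν + 3) / 2) := by
    intro y
    rw [show studentDensity (ν + 2) y
      = C' * (1 + y ^ 2 / (ν + 2)) ^ (-(ν + 2 + 1) / 2) from rfl, hexp_eq]
  -- integrability of the RHS integrand
  have hIH : Integrable (fun y : ℝ => (y : ℂ) *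
      Complex.exp (Complex.I * t * s * y) * (studentDensity (ν + 2) y : ℂ)) := by
    have h := (integrable_pow1 (ν + 2) ((ν + 3) / 2) hν2 (by linarith)).const_mul C'
    apply h.mono'
    · apply Continuous.aestronglyMeasurable
      exact (Complex.continuous_ofReal.mul (Complex.continuous_exp.comp
        (continuous_const.mul Complex.continuous_ofReal))).mul
        (Complex.continuous_ofReal.comp (hfc (ν + 2) hν2))
    · refine Eventually.of_forall fun y => ?_
      have hae : Complex.I * t * s * y = Complex.I * t * ((s * y : ℝ) : ℂ) := by
        push_cast; ring
      rw [norm_mul, norm_mul, hae, hexp1, mul_one, Complex.norm_real, Complex.norm_real]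
      simp only [Real.norm_eq_abs]
      rw [_root_.abs_of_nonneg (hfnn' y), hsd2 y,
        show -((ν + 3) / 2) = -(ν + 3) / 2 from (neg_div _ _).symm]
      exact le_of_eq (by ring)
  refine ⟨hIH, ?_⟩
  -- substitution x = s * y in the integral of exp * f'
  have hsub : (∫ x : ℝ, Complex.exp (Complex.I * t * x) * (f' x : ℂ))
      = -(s : ℂ) * ∫ y : ℝ, (y : ℂ) * Complex.exp (Complex.I * t * s * y) *
          (studentDensity (ν + 2) y : ℂ) := by
    set φ : ℝ → ℂ := fun x => Complex.exp (Complex.I * t * x) *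
      ((x : ℂ) * (((1 + x ^ 2 / ν) ^ (-(ν + 3) / 2) : ℝ) : ℂ)) with hφ
    have hsne : (s : ℂ) ≠ 0 := by exact_mod_cast hs_pos.ne'
    have hptf : ∀ x : ℝ, Complex.exp (Complex.I * t * x) * (f' x : ℂ)
        = ((C * (-(ν + 1) / ν) : ℝ) : ℂ) * φ x := by
      intro x
      have hfx : f' x = C * (-(ν + 1) / ν) * x * (1 + x ^ 2 / ν) ^ (-(ν + 3) / 2) := rfl
      rw [hφ, hfx]
      push_cast
      ring
    have h2 : (∫ x : ℝ, φ x) = (s : ℂ) * ∫ y : ℝ, φ (s * y) := by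
      have h3 := MeasureTheory.Measure.integral_comp_mul_left φ s
      rw [abs_of_pos (inv_pos.2 hs_pos)] at h3
      rw [h3, Complex.real_smul]
      push_cast
      rw [← mul_assoc, mul_inv_cancel₀ hsne, one_mul]
    have h4 : ∀ y : ℝ, φ (s * y) = (s : ℂ) * ((y : ℂ) *
        Complex.exp (Complex.I * t * s * y) *
        (((1 + y ^ 2 / (ν + 2)) ^ (-(ν + 3) / 2) : ℝ) : ℂ)) := by
      intro y
      have harg : 1 + (s * y) ^ 2 / ν = 1 + y ^ 2 / (ν + 2) := by
        rw [mul_pow, hs2]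
        field_simp
      show Complex.exp (Complex.I * t * ((s * y : ℝ) : ℂ)) *
        (((s * y : ℝ) : ℂ) * (((1 + (s * y) ^ 2 / ν) ^ (-(ν + 3) / 2) : ℝ) : ℂ)) = _
      rw [harg]
      push_cast
      ring
    have h5 : (∫ y : ℝ, (y : ℂ) * Complex.exp (Complex.I * t * s * y) *
        (studentDensity (ν + 2) y : ℂ))
        = (C' : ℂ) * ∫ y : ℝ, (y : ℂ) * Complex.exp (Complex.I * t * s * y) *
          (((1 + y ^ 2 / (ν + 2)) ^ (-(ν + 3) / 2) : ℝ) : ℂ) := by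
      have hpt : ∀ y : ℝ, (y : ℂ) * Complex.exp (Complex.I * t * s * y) *
          (studentDensity (ν + 2) y : ℂ)
          = (C' : ℂ) * ((y : ℂ) * Complex.exp (Complex.I * t * s * y) *
            (((1 + y ^ 2 / (ν + 2)) ^ (-(ν + 3) / 2) : ℝ) : ℂ)) := by
        intro y
        rw [hsd2 y]
        push_cast
        ring
      simp_rw [hpt]
      exact integral_const_mul _ _
    have h6 : (∫ y : ℝ, φ (s * y)) = (s : ℂ) * ∫ y : ℝ, (y : ℂ) *
        Complex.exp (Complex.I * t * s * y) *
        (((1 + y ^ 2 / (ν + 2)) ^ (-(ν + 3) / 2) : ℝ) : ℂ) := by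
      simp_rw [h4]
      exact integral_const_mul _ _
    calc (∫ x : ℝ, Complex.exp (Complex.I * t * x) * (f' x : ℂ))
        = ∫ x : ℝ, ((C * (-(ν + 1) / ν) : ℝ) : ℂ) * φ x := by simp_rw [hptf]
      _ = ((C * (-(ν + 1) / ν) : ℝ) : ℂ) * ∫ x : ℝ, φ x := integral_const_mul _ _
      _ = ((C * (-(ν + 1) / ν) : ℝ) : ℂ) * ((s : ℂ) * ((s : ℂ) * ∫ y : ℝ, (y : ℂ) *
            Complex.exp (Complex.I * t * s * y) *
            (((1 + y ^ 2 / (ν + 2)) ^ (-(ν + 3) / 2) : ℝ) : ℂ))) := by rw [h2, h6]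
      _ = -(s : ℂ) * ((C' : ℂ) * ∫ y : ℝ, (y : ℂ) *
            Complex.exp (Complex.I * t * s * y) *
            (((1 + y ^ 2 / (ν + 2)) ^ (-(ν + 3) / 2) : ℝ) : ℂ)) := by
          have hcr : (C * (-(ν + 1) / ν)) * s * s = -s * C' := by
            rw [hCC]
            field_simp
          have hcc : ((C * (-(ν + 1) / ν) : ℝ) : ℂ) * (s : ℂ) * (s : ℂ)
              = -(s : ℂ) * (C' : ℂ) := by exact_mod_cast congrArg Complex.ofReal hcr
          linear_combination (∫ y : ℝ, (y : ℂ) * Complex.exp (Complex.I * t * s * y) *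
            (((1 + y ^ 2 / (ν + 2)) ^ (-(ν + 3) / 2) : ℝ) : ℂ)) * hcc
      _ = -(s : ℂ) * ∫ y : ℝ, (y : ℂ) * Complex.exp (Complex.I * t * s * y) *
            (studentDensity (ν + 2) y : ℂ) := by rw [h5]
  -- conclude
  have htne : (t : ℂ) ≠ 0 := by exact_mod_cast ht.ne'
  rw [hsub] at hkey
  apply mul_left_cancel₀ (mul_ne_zero Complex.I_ne_zero htne)
  have h7 : Complex.I * t *
      (∫ x : ℝ, Complex.exp (Complex.I * t * x) * (studentDensity ν x : ℂ))
      = (s : ℂ) * ∫ y : ℝ, (y : ℂ) * Complex.exp (Complex.I * t * s * y) *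
          (studentDensity (ν + 2) y : ℂ) := by linear_combination hkey
  rw [h7]
  have hI2 : Complex.I * Complex.I = -1 := Complex.I_mul_I
  have htt : (t : ℂ) * (t : ℂ)⁻¹ = 1 := mul_inv_cancel₀ htne
  linear_combination ((s : ℂ) * ↑t * (t : ℂ)⁻¹ * (∫ y : ℝ, (y : ℂ) *
    Complex.exp (Complex.I * t * s * y) * (studentDensity (ν + 2) y : ℂ))) * hI2
    - ((s : ℂ) * (∫ y : ℝ, (y : ℂ) *
    Complex.exp (Complex.I * t * s * y) * (studentDensity (ν + 2) y : ℂ))) * htt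
end

section
/- (Characteristic function of Student's t-distribution.) For every ν > 2 and every t > 0, ∫_{-∞}^{∞} e^{itx} f_ν(x) dx = ((√ν · t)^{ν/2} / (Γ(ν/2) · 2^{ν/2 − 1})) · K_{ν/2}(√ν · t), where K_μ(x) = (1/2) ∫_0^{∞} u^{μ−1} e^{−x(u + u^{−1})/2} du is the modified Bessel function of the second kind given by its integral representation. -/
set_option maxHeartbeats 1000000

open MeasureTheory Real Complex

/-- The modified Bessel function of the second kind, via its integral representation. -/
noncomputable def besselK (μ x : ℝ) : ℝ :=
  (1 / 2) * ∫ u in Set.Ioi (0 : ℝ), u ^ (μ - 1) * Real.exp (-x * (u + u⁻¹) / 2)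

theorem studentCharFun_eq_besselK (ν : ℝ) (hν : 2 < ν) (t : ℝ) (ht : 0 < t) :
    (∫ x : ℝ, Complex.exp (Complex.I * t * x) * (studentDensity ν x : ℂ)) =
      (((Real.sqrt ν * t) ^ (ν / 2) / (Real.Gamma (ν / 2) * (2 : ℝ) ^ (ν / 2 - 1)))
        * besselK (ν / 2) (Real.sqrt ν * t) : ℝ) := by
  have hν0 : (0:ℝ) < ν := by linarith
  have hπν : (0:ℝ) < Real.pi * ν := by positivity
  set s : ℝ := (ν + 1) / 2 with hs_def
  have hs : 0 < s := by rw [hs_def]; linarith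
  have hs1 : 1 ≤ s := by rw [hs_def]; linarith
  set m : ℝ := ν / 2 with hm_def
  have hm : 0 < m := by rw [hm_def]; linarith
  set a : ℝ := Real.sqrt ν * t with ha_def
  have ha : 0 < a := mul_pos (Real.sqrt_pos.mpr hν0) ht
  have ha2 : a ^ 2 = ν * t ^ 2 := by rw [ha_def, mul_pow, Real.sq_sqrt hν0.le]
  have hΓs : 0 < Real.Gamma s := Real.Gamma_pos_of_pos hs
  have hΓm : 0 < Real.Gamma m := Real.Gamma_pos_of_pos hm
  -- the Gamma-integral representation of the power kernel
  have hr : ∀ x : ℝ, 0 < 1 + x ^ 2 / ν := fun x => by positivity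
  have hpow : ∀ x : ℝ, (1 + x ^ 2 / ν) ^ (-(ν + 1) / 2) =
      (Real.Gamma s)⁻¹ * ∫ u in Set.Ioi (0:ℝ), u ^ (s - 1) * Real.exp (-((1 + x ^ 2 / ν) * u)) := by
    intro x
    rw [Real.integral_rpow_mul_exp_neg_mul_Ioi hs (hr x), one_div,
      Real.inv_rpow (hr x).le, ← Real.rpow_neg (hr x).le, neg_div, ← hs_def]
    field_simp
  -- integrability of the inner (u)-integrand for every x
  have hint_u : ∀ x : ℝ, IntegrableOn
      (fun u : ℝ => u ^ (s - 1) * Real.exp (-((1 + x ^ 2 / ν) * u))) (Set.Ioi 0) := by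
    intro x
    have h := integrableOn_rpow_mul_exp_neg_mul_rpow (p := 1) (s := s - 1) (b := 1 + x ^ 2 / ν)
      (by linarith) zero_lt_one (hr x)
    refine h.congr_fun (fun u hu => ?_) measurableSet_Ioi
    simp only [Real.rpow_one, pow_one, neg_mul]
  have hnorm1 : ∀ x : ℝ, ‖Complex.exp (Complex.I * t * x)‖ = 1 := by
    intro x
    rw [show (Complex.I * (t:ℂ) * (x:ℂ)) = ((t * x : ℝ) : ℂ) * Complex.I by push_cast; ring,
      Complex.norm_exp_ofReal_mul_I]
  -- joint integrability, for Fubini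
  have hmeas : AEStronglyMeasurable
      (Function.uncurry fun (x u : ℝ) => Complex.exp (Complex.I * t * x) *
        ((u ^ (s - 1) * Real.exp (-((1 + x ^ 2 / ν) * u)) : ℝ) : ℂ))
      (volume.prod (volume.restrict (Set.Ioi 0))) := by
    apply Measurable.aestronglyMeasurable
    unfold Function.uncurry
    fun_prop
  have hnormint : ∀ x : ℝ, (∫ u in Set.Ioi (0:ℝ),
      ‖Complex.exp (Complex.I * t * x) *
        ((u ^ (s - 1) * Real.exp (-((1 + x ^ 2 / ν) * u)) : ℝ) : ℂ)‖)
      = (1 + x ^ 2 / ν) ^ (-(ν + 1) / 2) * Real.Gamma s := by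
    intro x
    rw [show (∫ u in Set.Ioi (0:ℝ), ‖Complex.exp (Complex.I * t * x) *
        ((u ^ (s - 1) * Real.exp (-((1 + x ^ 2 / ν) * u)) : ℝ) : ℂ)‖)
        = ∫ u in Set.Ioi (0:ℝ), u ^ (s - 1) * Real.exp (-((1 + x ^ 2 / ν) * u)) from
      setIntegral_congr_fun measurableSet_Ioi (fun u hu => by
        rw [norm_mul, hnorm1, one_mul, Complex.norm_real, Real.norm_eq_abs,
          _root_.abs_of_nonneg (mul_nonneg (Real.rpow_nonneg (le_of_lt hu) _)
            (Real.exp_pos _).le)])]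
    rw [hpow x]
    field_simp
  have hfub : Integrable
      (Function.uncurry fun (x u : ℝ) => Complex.exp (Complex.I * t * x) *
        ((u ^ (s - 1) * Real.exp (-((1 + x ^ 2 / ν) * u)) : ℝ) : ℂ))
      (volume.prod (volume.restrict (Set.Ioi 0))) := by
    rw [MeasureTheory.integrable_prod_iff hmeas]
    simp only [Function.uncurry_apply_pair]
    constructor
    · refine Filter.Eventually.of_forall fun x => ?_
      exact ((hint_u x).ofReal.const_mul _)
    · refine (MeasureTheory.Integrable.congr ?_ (Filter.Eventually.of_forall fun x =>
        (hnormint x).symm))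
      -- integrability of x ↦ (1 + x^2/ν)^(-(ν+1)/2) * Γ s
      have hb : ∀ x : ℝ, ‖(1 + x ^ 2 / ν) ^ (-(ν + 1) / 2) * Real.Gamma s‖ ≤
          (Real.Gamma s * ν) * (1 + x ^ 2)⁻¹ := by
        intro x
        rw [Real.norm_eq_abs, _root_.abs_of_nonneg (by positivity)]
        have h1 : (1 + x ^ 2 / ν) ^ (-(ν + 1) / 2) ≤ (1 + x ^ 2 / ν) ^ (-1 : ℝ) :=
          Real.rpow_le_rpow_of_exponent_le
            (by linarith [div_nonneg (sq_nonneg x) hν0.le])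
            (by rw [neg_div]; linarith)
        have h2 : (1 + x ^ 2 / ν) ^ (-1 : ℝ) = (1 + x ^ 2 / ν)⁻¹ := by
          rw [Real.rpow_neg_one]
        have h3 : (1 + x ^ 2 / ν)⁻¹ ≤ ν * (1 + x ^ 2)⁻¹ := by
          rw [show (1 : ℝ) + x ^ 2 / ν = (ν + x ^ 2) / ν by field_simp, inv_div,
            ← div_eq_mul_inv]
          gcongr
          all_goals nlinarith [sq_nonneg x]
        calc (1 + x ^ 2 / ν) ^ (-(ν + 1) / 2) * Real.Gamma s
            ≤ (ν * (1 + x ^ 2)⁻¹) * Real.Gamma s := by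
              apply mul_le_mul_of_nonneg_right _ hΓs.le
              calc (1 + x ^ 2 / ν) ^ (-(ν + 1) / 2) ≤ (1 + x ^ 2 / ν) ^ (-1 : ℝ) := h1
                _ = (1 + x ^ 2 / ν)⁻¹ := h2
                _ ≤ ν * (1 + x ^ 2)⁻¹ := h3
          _ = (Real.Gamma s * ν) * (1 + x ^ 2)⁻¹ := by ring
      refine MeasureTheory.Integrable.mono
        (integrable_inv_one_add_sq.const_mul (Real.Gamma s * ν)) ?_
        (Filter.Eventually.of_forall fun x => ?_)
      · exact ((show Measurable fun x : ℝ => (1 + x ^ 2 / ν) ^ (-(ν + 1) / 2) by fun_prop).mul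
          measurable_const).aestronglyMeasurable
      · exact le_trans (hb x) (le_abs_self _)
  -- the Gaussian (inner) integral
  have hgauss : ∀ u ∈ Set.Ioi (0:ℝ),
      (∫ x : ℝ, Complex.exp (Complex.I * t * x) *
        ((u ^ (s - 1) * Real.exp (-((1 + x ^ 2 / ν) * u)) : ℝ) : ℂ))
      = ((Real.sqrt (Real.pi * ν) * (u ^ (m - 1) *
          Real.exp (-(u + ν * t ^ 2 / (4 * u)))) : ℝ) : ℂ) := by
    intro u hu
    have hu0 : (0:ℝ) < u := hu
    have hb : (0:ℝ) < u / ν := div_pos hu0 hν0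
    have hcu : (u:ℂ) ≠ 0 := Complex.ofReal_ne_zero.mpr hu0.ne'
    have hcν : (ν:ℂ) ≠ 0 := Complex.ofReal_ne_zero.mpr hν0.ne'
    have e1 : ∀ x : ℝ, Complex.exp (Complex.I * t * x) *
        ((u ^ (s - 1) * Real.exp (-((1 + x ^ 2 / ν) * u)) : ℝ) : ℂ)
        = ((u ^ (s - 1) * Real.exp (-u) : ℝ) : ℂ) *
          (Complex.exp (Complex.I * t * x) *
            Complex.exp (-(((u / ν : ℝ)) : ℂ) * (x:ℂ) ^ 2)) := by
      intro x
      rw [show -((1 + x ^ 2 / ν) * u) = -u + -(u / ν) * x ^ 2 by ring, Real.exp_add]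
      push_cast
      ring
    have hg := fourierIntegral_gaussian (b := ((u / ν : ℝ) : ℂ)) (by simpa using hb) ((t : ℝ) : ℂ)
    have e2 : ((Real.pi : ℂ) / ((u / ν : ℝ) : ℂ)) = ((Real.pi * ν / u : ℝ) : ℂ) := by
      push_cast
      field_simp
    have e3 : (((Real.pi * ν / u : ℝ) : ℂ)) ^ (1 / 2 : ℂ)
        = ((Real.sqrt (Real.pi * ν / u) : ℝ) : ℂ) := by
      rw [Real.sqrt_eq_rpow, Complex.ofReal_cpow (by positivity : (0:ℝ) ≤ Real.pi * ν / u)]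
      norm_num
    have e4 : (-((t:ℂ)) ^ 2 / (4 * ((u / ν : ℝ) : ℂ))) = ((-(ν * t ^ 2 / (4 * u)) : ℝ) : ℂ) := by
      push_cast
      field_simp
    calc (∫ x : ℝ, Complex.exp (Complex.I * t * x) *
        ((u ^ (s - 1) * Real.exp (-((1 + x ^ 2 / ν) * u)) : ℝ) : ℂ))
        = ((u ^ (s - 1) * Real.exp (-u) : ℝ) : ℂ) *
            ∫ x : ℝ, Complex.exp (Complex.I * t * x) *
              Complex.exp (-(((u / ν : ℝ)) : ℂ) * (x:ℂ) ^ 2) := by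
          simp_rw [e1]
          rw [MeasureTheory.integral_const_mul]
      _ = ((u ^ (s - 1) * Real.exp (-u) : ℝ) : ℂ) *
            (((Real.sqrt (Real.pi * ν / u) : ℝ) : ℂ) *
              ((Real.exp (-(ν * t ^ 2 / (4 * u))) : ℝ) : ℂ)) := by
          rw [hg, e2, e3, e4, ← Complex.ofReal_exp]
      _ = ((Real.sqrt (Real.pi * ν) * (u ^ (m - 1) *
            Real.exp (-(u + ν * t ^ 2 / (4 * u)))) : ℝ) : ℂ) := by
          rw [← Complex.ofReal_mul, ← Complex.ofReal_mul]
          congr 1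
          have key : u ^ (s - 1) * (Real.sqrt (Real.pi * ν) / Real.sqrt u)
              = Real.sqrt (Real.pi * ν) * u ^ (m - 1) := by
            rw [Real.sqrt_eq_rpow u, div_eq_mul_inv, ← Real.rpow_neg hu0.le,
              mul_comm (Real.sqrt (Real.pi * ν)) _, ← mul_assoc, ← Real.rpow_add hu0,
              show s - 1 + -(1 / 2 : ℝ) = m - 1 by rw [hs_def, hm_def]; ring]
            ring
          calc u ^ (s - 1) * Real.exp (-u) *
                (Real.sqrt (Real.pi * ν / u) * Real.exp (-(ν * t ^ 2 / (4 * u))))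
              = (u ^ (s - 1) * (Real.sqrt (Real.pi * ν) / Real.sqrt u)) *
                  (Real.exp (-u) * Real.exp (-(ν * t ^ 2 / (4 * u)))) := by
                rw [Real.sqrt_div hπν.le u]; ring
            _ = Real.sqrt (Real.pi * ν) * (u ^ (m - 1) *
                  Real.exp (-(u + ν * t ^ 2 / (4 * u)))) := by
                rw [key, ← Real.exp_add,
                  show -u + -(ν * t ^ 2 / (4 * u)) = -(u + ν * t ^ 2 / (4 * u)) by ring]
                ring
  -- change of variables in the remaining u-integral
  have hsub : (∫ u in Set.Ioi (0:ℝ), u ^ (m - 1) * Real.exp (-(u + ν * t ^ 2 / (4 * u))))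
      = (a / 2) ^ m * (2 * besselK m a) := by
    have h2 : (0:ℝ) < a / 2 := by positivity
    have hcomp := MeasureTheory.integral_comp_mul_left_Ioi
      (fun u : ℝ => u ^ (m - 1) * Real.exp (-(u + ν * t ^ 2 / (4 * u)))) 0 h2
    rw [mul_zero, smul_eq_mul] at hcomp
    have h' : (∫ u in Set.Ioi (0:ℝ), u ^ (m - 1) * Real.exp (-(u + ν * t ^ 2 / (4 * u))))
        = (a / 2) * ∫ v in Set.Ioi (0:ℝ), ((a / 2) * v) ^ (m - 1) *
            Real.exp (-((a / 2) * v + ν * t ^ 2 / (4 * ((a / 2) * v)))) := by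
      rw [hcomp]
      field_simp
      congr 1
      funext u
      ring_nf
    have hcong : ∀ v ∈ Set.Ioi (0:ℝ),
        ((a / 2) * v) ^ (m - 1) *
            Real.exp (-((a / 2) * v + ν * t ^ 2 / (4 * ((a / 2) * v))))
        = (a / 2) ^ (m - 1) * (v ^ (m - 1) * Real.exp (-a * (v + v⁻¹) / 2)) := by
      intro v hv
      have hv0 : (0:ℝ) < v := hv
      rw [Real.mul_rpow h2.le hv0.le,
        show -((a / 2) * v + ν * t ^ 2 / (4 * ((a / 2) * v))) = -a * (v + v⁻¹) / 2 by
          rw [← ha2]; field_simp; ring,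
        mul_assoc]
    rw [h', setIntegral_congr_fun measurableSet_Ioi hcong, MeasureTheory.integral_const_mul]
    have h5 : (a / 2) * (a / 2) ^ (m - 1) = (a / 2) ^ m := by
      calc (a / 2) * (a / 2) ^ (m - 1)
          = (a / 2) ^ (1 : ℝ) * (a / 2) ^ (m - 1) := by rw [Real.rpow_one]
        _ = (a / 2) ^ (1 + (m - 1)) := (Real.rpow_add h2 _ _).symm
        _ = (a / 2) ^ m := by ring_nf
    simp only [besselK]
    rw [← h5]
    ring
  -- put everything together
  calc (∫ x : ℝ, Complex.exp (Complex.I * t * x) * (studentDensity ν x : ℂ))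
      = ((Real.Gamma s / (Real.sqrt (Real.pi * ν) * Real.Gamma m)) * (Real.Gamma s)⁻¹ : ℝ) *
        ∫ x : ℝ, ∫ u in Set.Ioi (0:ℝ), Complex.exp (Complex.I * t * x) *
          ((u ^ (s - 1) * Real.exp (-((1 + x ^ 2 / ν) * u)) : ℝ) : ℂ) := by
        rw [show (fun x : ℝ => Complex.exp (Complex.I * t * x) * (studentDensity ν x : ℂ))
            = fun x : ℝ => ((Real.Gamma s / (Real.sqrt (Real.pi * ν) * Real.Gamma m)) *
              (Real.Gamma s)⁻¹ : ℝ) * ∫ u in Set.Ioi (0:ℝ),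
                Complex.exp (Complex.I * t * x) *
                  ((u ^ (s - 1) * Real.exp (-((1 + x ^ 2 / ν) * u)) : ℝ) : ℂ) from
          funext fun x => by
            rw [MeasureTheory.integral_const_mul, studentDensity, hpow x, ← hs_def, ← hm_def]
            push_cast
            rw [show ((∫ u in Set.Ioi (0:ℝ), u ^ (s - 1) * Real.exp (-((1 + x ^ 2 / ν) * u)) : ℝ) : ℂ)
                = ∫ u in Set.Ioi (0:ℝ),
                    ((u ^ (s - 1) * Real.exp (-((1 + x ^ 2 / ν) * u)) : ℝ) : ℂ) from
                integral_ofReal.symm]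
            push_cast
            ring]
        rw [MeasureTheory.integral_const_mul]
    _ = ((Real.Gamma s / (Real.sqrt (Real.pi * ν) * Real.Gamma m)) * (Real.Gamma s)⁻¹ : ℝ) *
        ∫ u in Set.Ioi (0:ℝ), ∫ x : ℝ, Complex.exp (Complex.I * t * x) *
          ((u ^ (s - 1) * Real.exp (-((1 + x ^ 2 / ν) * u)) : ℝ) : ℂ) := by
        rw [MeasureTheory.integral_integral_swap hfub]
    _ = ((Real.Gamma s / (Real.sqrt (Real.pi * ν) * Real.Gamma m)) * (Real.Gamma s)⁻¹ : ℝ) *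
        ((Real.sqrt (Real.pi * ν) *
          ∫ u in Set.Ioi (0:ℝ), u ^ (m - 1) * Real.exp (-(u + ν * t ^ 2 / (4 * u))) : ℝ) : ℂ) := by
        rw [setIntegral_congr_fun measurableSet_Ioi hgauss,
          show (∫ u in Set.Ioi (0:ℝ), ((Real.sqrt (Real.pi * ν) * (u ^ (m - 1) *
              Real.exp (-(u + ν * t ^ 2 / (4 * u)))) : ℝ) : ℂ))
            = ((∫ u in Set.Ioi (0:ℝ), Real.sqrt (Real.pi * ν) * (u ^ (m - 1) *
              Real.exp (-(u + ν * t ^ 2 / (4 * u)))) : ℝ) : ℂ) from integral_ofReal,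
          MeasureTheory.integral_const_mul]
    _ = (((a ^ m / (Real.Gamma m * (2:ℝ) ^ (m - 1))) * besselK m a : ℝ) : ℂ) := by
        rw [hsub]
        norm_cast
        have h2m : (0:ℝ) < (2:ℝ) ^ m := Real.rpow_pos_of_pos two_pos m
        rw [Real.div_rpow ha.le (by norm_num : (0:ℝ) ≤ 2),
          Real.rpow_sub two_pos, Real.rpow_one]
        have hsq : Real.sqrt (Real.pi * ν) ≠ 0 := ne_of_gt (Real.sqrt_pos.mpr hπν)
        field_simp
end

section
/- (Main theorem: characteristic function of Student's t-distribution, all degrees of freedom.) For every ν > 0 and every t ∈ ℝ with t ≠ 0, ∫_{-∞}^{∞} e^{itx} f_ν(x) dx = ((√ν · |t|)^{ν/2} / (Γ(ν/2) · 2^{ν/2 − 1})) · (1/2) ∫_0^{∞} u^{ν/2 − 1} e^{−√ν · |t| · (u + u^{−1})/2} du. -/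
open MeasureTheory Real Complex
open Set

lemma gaussFourier {b : ℝ} (hb : 0 < b) (t : ℝ) :
    ∫ x : ℝ, Complex.exp (Complex.I * t * x) * (Real.exp (-(b * x ^ 2)) : ℂ) =
      ((Real.sqrt (π / b) * Real.exp (-(t ^ 2 / (4 * b))) : ℝ) : ℂ) := by
  have h := fourierIntegral_gaussian (b := (b : ℂ)) (by simpa using hb) (t : ℂ)
  rw [show (∫ x : ℝ, Complex.exp (Complex.I * t * x) * (Real.exp (-(b * x ^ 2)) : ℂ))
      = ∫ x : ℝ, Complex.exp (Complex.I * t * x) * Complex.exp (-(b:ℂ) * x ^ 2) from by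
    congr 1; funext x; rw [Complex.ofReal_exp]; push_cast; ring_nf, h]
  rw [show ((π:ℂ) / b) = ((π / b : ℝ) : ℂ) by push_cast; ring]
  rw [show ((1/2 : ℂ)) = ((1/2 : ℝ) : ℂ) by norm_num]
  rw [← Complex.ofReal_cpow (by positivity), ← Real.sqrt_eq_rpow]
  rw [show (-(t:ℂ) ^ 2 / (4 * b)) = ((-(t^2/(4*b)) : ℝ) : ℂ) by push_cast; ring]
  rw [← Complex.ofReal_exp, ← Complex.ofReal_mul]

lemma keyFubini (ν : ℝ) (hν : 0 < ν) (t : ℝ) :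
    ∫ x : ℝ, Complex.exp (Complex.I * t * x) * ((1 + x ^ 2 / ν) ^ (-(ν + 1) / 2) : ℝ) =
      (((Real.Gamma ((ν + 1) / 2))⁻¹ * Real.sqrt (π * ν) *
        ∫ s in Ioi (0:ℝ), s ^ (ν / 2 - 1) * Real.exp (-(s + ν * t ^ 2 / (4 * s))) : ℝ) : ℂ) := by
  set q : ℝ := (ν + 1) / 2 with hqdef
  have hq : 0 < q := by positivity
  set f : ℝ → ℝ → ℂ := fun s x =>
    Complex.exp (Complex.I * t * x) * ((s ^ (q - 1) * Real.exp (-((1 + x ^ 2 / ν) * s)) : ℝ) : ℂ)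
    with hfdef
  -- norm of f
  have hnorm : ∀ s ∈ Ioi (0:ℝ), ∀ x : ℝ,
      ‖f s x‖ = s ^ (q - 1) * Real.exp (-s) * Real.exp (-(s / ν * x ^ 2)) := by
    intro s hs x
    have hs0 : (0:ℝ) < s := hs
    rw [hfdef]
    simp only [norm_mul, Complex.norm_exp, Complex.norm_real, Real.norm_eq_abs]
    have h1 : (Complex.I * t * x).re = 0 := by simp
    rw [h1, Real.exp_zero, one_mul, _root_.abs_of_nonneg (by positivity : (0:ℝ) ≤ s ^ (q-1)), _root_.abs_of_nonneg (Real.exp_pos _).le]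
    rw [mul_assoc, ← Real.exp_add]
    congr 2
    field_simp
    ring
  -- integrability on the product
  have hmeas : AEStronglyMeasurable (Function.uncurry f)
      ((volume.restrict (Ioi (0:ℝ))).prod volume) := by
    apply Measurable.aestronglyMeasurable
    rw [hfdef, Function.uncurry_def]
    apply Measurable.mul
    · exact Complex.measurable_exp.comp
        (measurable_const.mul (Complex.measurable_ofReal.comp measurable_snd))
    · refine Complex.measurable_ofReal.comp (Measurable.mul ?_ ?_)
      · exact measurable_fst.pow_const _
      · exact Real.measurable_exp.comp
          (((measurable_const.add ((measurable_snd.pow_const 2).div_const ν)).mul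
            measurable_fst).neg)
  have hG : Real.Gamma q ≠ 0 := (Real.Gamma_pos_of_pos hq).ne'
  -- integrability on the product measure
  have hInt : Integrable (Function.uncurry f)
      ((volume.restrict (Ioi (0:ℝ))).prod volume) := by
    rw [integrable_prod_iff hmeas]
    constructor
    · filter_upwards [ae_restrict_mem measurableSet_Ioi] with s hs
      have hs0 : (0:ℝ) < s := hs
      have h1 := (integrable_cexp_quadratic (b := ((s/ν : ℝ) : ℂ))
        (by simpa using div_pos hs0 hν) (Complex.I * t) (-(s:ℂ))).const_mul
        (((s ^ (q-1) : ℝ)) : ℂ)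
      refine h1.congr (Filter.Eventually.of_forall fun x => ?_)
      simp only [Function.uncurry_apply_pair]
      have hE : (-(((s/ν : ℝ)):ℂ) * x^2 + (Complex.I*t)*x + (-(s:ℂ)))
          = Complex.I*t*x + ((-((1+x^2/ν)*s) : ℝ) : ℂ) := by
        push_cast
        have : (ν:ℂ) ≠ 0 := by exact_mod_cast hν.ne'
        field_simp
        ring
      rw [hE, Complex.exp_add, hfdef]
      push_cast [Complex.ofReal_exp]
      ring
    · have target : IntegrableOn
          (fun s : ℝ => Real.sqrt (π*ν) * (s ^ (ν/2 - 1) * Real.exp (-1 * s ^ (1:ℝ))))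
          (Ioi (0:ℝ)) := by
        exact (integrableOn_rpow_mul_exp_neg_mul_rpow
          (by linarith : (-1:ℝ) < ν/2 - 1) one_pos one_pos).const_mul _
      refine (target.congr_fun (fun s hs => ?_) measurableSet_Ioi)
      have hs0 : (0:ℝ) < s := hs
      have hb : 0 < s/ν := div_pos hs0 hν
      have hint : ∫ x : ℝ, ‖Function.uncurry f (s, x)‖
          = (s ^ (q-1) * Real.exp (-s)) * Real.sqrt (π/(s/ν)) := by
        have h7 : (fun x : ℝ => ‖Function.uncurry f (s, x)‖)
            = fun x => (s ^ (q-1) * Real.exp (-s)) * Real.exp (-(s/ν) * x^2) := by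
          funext x
          simp only [Function.uncurry_apply_pair]
          rw [hnorm s hs x]
          simp only [neg_mul]
        rw [h7, integral_const_mul, integral_gaussian]
      have h5 : Real.sqrt (π/(s/ν)) = Real.sqrt (π*ν) * (Real.sqrt s)⁻¹ := by
        rw [show π/(s/ν) = (π*ν)/s from by field_simp,
          Real.sqrt_div (by positivity) s, div_eq_mul_inv]
      have h6 : s ^ (ν/2 - 1) = s ^ (q-1) * (Real.sqrt s)⁻¹ := by
        rw [Real.sqrt_eq_rpow, ← Real.rpow_neg hs0.le, ← Real.rpow_add hs0]
        congr 1
        rw [hqdef]; ring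
      beta_reduce
      rw [hint, h5, h6, Real.rpow_one, neg_one_mul]
      ring
  have hswap := MeasureTheory.integral_integral_swap hInt
  -- pointwise Gamma representation
  have hpt : ∀ x : ℝ, Complex.exp (Complex.I * t * x) * ((1 + x ^ 2 / ν) ^ (-(ν + 1) / 2) : ℝ)
      = (((Real.Gamma q)⁻¹ : ℝ) : ℂ) * ∫ s in Ioi (0:ℝ), f s x := by
    intro x
    have hr : (0:ℝ) < 1 + x ^ 2 / ν := by positivity
    have h2 : ∫ s in Ioi (0:ℝ), f s x
        = Complex.exp (Complex.I * t * x) *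
          (((∫ s in Ioi (0:ℝ), s ^ (q - 1) * Real.exp (-((1 + x ^ 2 / ν) * s))) : ℝ) : ℂ) := by
      simp only [hfdef]
      rw [integral_const_mul]
      congr 1
      exact integral_ofReal
    rw [h2, integral_rpow_mul_exp_neg_mul_Ioi hq hr]
    have h3 : ((1:ℝ) / (1 + x ^ 2 / ν)) ^ q = (1 + x ^ 2 / ν) ^ (-(ν + 1) / 2) := by
      rw [one_div, Real.inv_rpow hr.le, ← Real.rpow_neg hr.le]
      congr 1
      rw [hqdef]; ring
    rw [h3]
    have hGc : ((Real.Gamma q : ℝ) : ℂ) ≠ 0 := by exact_mod_cast hG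
    rw [Complex.ofReal_mul, Complex.ofReal_inv]
    field_simp
  -- compute the inner x-integral for each s > 0
  have hinner : ∀ s ∈ Ioi (0:ℝ), (∫ x : ℝ, f s x)
      = ((Real.sqrt (π * ν) * (s ^ (ν/2 - 1) * Real.exp (-(s + ν * t ^ 2 / (4 * s)))) : ℝ) : ℂ) := by
    intro s hs
    have hs0 : (0:ℝ) < s := hs
    have hb : 0 < s / ν := div_pos hs0 hν
    have h4 : ∀ x : ℝ, f s x = ((s ^ (q - 1) * Real.exp (-s) : ℝ) : ℂ) *
        (Complex.exp (Complex.I * t * x) * ((Real.exp (-(s / ν * x ^ 2)) : ℝ) : ℂ)) := by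
      intro x
      have harg : -((1 + x ^ 2 / ν) * s) = -s + -(s / ν * x ^ 2) := by field_simp; ring
      rw [hfdef]
      simp only [harg, Real.exp_add]
      push_cast
      ring
    calc (∫ x : ℝ, f s x)
        = ((s ^ (q - 1) * Real.exp (-s) : ℝ) : ℂ) *
          ∫ x : ℝ, Complex.exp (Complex.I * t * x) * ((Real.exp (-(s / ν * x ^ 2)) : ℝ) : ℂ) := by
          simp only [h4]; rw [integral_const_mul]
      _ = ((Real.sqrt (π * ν) * (s ^ (ν/2 - 1) * Real.exp (-(s + ν * t ^ 2 / (4 * s)))) : ℝ) : ℂ) := by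
          rw [gaussFourier hb t, ← Complex.ofReal_mul]
          norm_cast
          have h5 : Real.sqrt (π / (s / ν)) = Real.sqrt (π * ν) * (Real.sqrt s)⁻¹ := by
            rw [show π / (s / ν) = (π * ν) / s from by field_simp,
              Real.sqrt_div (by positivity) s, div_eq_mul_inv]
          have h6 : s ^ (ν/2 - 1) = s ^ (q - 1) * (Real.sqrt s)⁻¹ := by
            rw [Real.sqrt_eq_rpow, ← Real.rpow_neg hs0.le, ← Real.rpow_add hs0]
            congr 1
            rw [hqdef]; ring
          have h8 : Real.exp (-s) * Real.exp (-(t ^ 2 / (4 * (s / ν))))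
              = Real.exp (-(s + ν * t ^ 2 / (4 * s))) := by
            rw [← Real.exp_add]
            congr 1
            field_simp
            ring
          rw [h5, h6, ← h8]
          ring
  -- assemble
  calc (∫ x : ℝ, Complex.exp (Complex.I * t * x) * ((1 + x ^ 2 / ν) ^ (-(ν + 1) / 2) : ℝ))
      = ∫ x : ℝ, (((Real.Gamma q)⁻¹ : ℝ) : ℂ) * ∫ s in Ioi (0:ℝ), f s x := by
        exact integral_congr_ae (Filter.Eventually.of_forall hpt)
    _ = (((Real.Gamma q)⁻¹ : ℝ) : ℂ) * ∫ s in Ioi (0:ℝ), ∫ x : ℝ, f s x := by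
        rw [integral_const_mul, hswap]
    _ = (((Real.Gamma q)⁻¹ * Real.sqrt (π * ν) *
          ∫ s in Ioi (0:ℝ), s ^ (ν / 2 - 1) * Real.exp (-(s + ν * t ^ 2 / (4 * s))) : ℝ) : ℂ) := by
        rw [setIntegral_congr_fun measurableSet_Ioi hinner]
        rw [show (∫ s in Ioi (0:ℝ), ((Real.sqrt (π * ν) *
            (s ^ (ν/2 - 1) * Real.exp (-(s + ν * t ^ 2 / (4 * s)))) : ℝ) : ℂ))
          = ((∫ s in Ioi (0:ℝ), Real.sqrt (π * ν) *
            (s ^ (ν/2 - 1) * Real.exp (-(s + ν * t ^ 2 / (4 * s)))) : ℝ) : ℂ) from integral_ofReal]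
        rw [integral_const_mul]
        push_cast
        ring


theorem studentCharFun_formula (ν : ℝ) (hν : 0 < ν) (t : ℝ) (ht : t ≠ 0) :
    (∫ x : ℝ, Complex.exp (Complex.I * t * x) * (studentDensity ν x : ℂ)) =
      (((Real.sqrt ν * |t|) ^ (ν / 2) / (Real.Gamma (ν / 2) * (2 : ℝ) ^ (ν / 2 - 1))) *
        ((1 / 2) * ∫ u in Set.Ioi (0 : ℝ),
          u ^ (ν / 2 - 1) * Real.exp (-(Real.sqrt ν * |t|) * (u + u⁻¹) / 2)) : ℝ) := by
  set a : ℝ := Real.sqrt ν * |t| with hadef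
  have ha : 0 < a := mul_pos (Real.sqrt_pos.mpr hν) (abs_pos.mpr ht)
  have ha2 : (0:ℝ) < a / 2 := by linarith
  have hasq : a ^ 2 = ν * t ^ 2 := by
    rw [hadef, mul_pow, Real.sq_sqrt hν.le, _root_.sq_abs]
  set J : ℝ := ∫ u in Ioi (0:ℝ), u ^ (ν / 2 - 1) * Real.exp (-a * (u + u⁻¹) / 2) with hJdef
  -- substitution s = (a/2) u
  set g : ℝ → ℝ := fun s => s ^ (ν / 2 - 1) * Real.exp (-(s + ν * t ^ 2 / (4 * s))) with hgdef
  have hsub : (∫ s in Ioi (0:ℝ), g s) = (a / 2) ^ (ν / 2) * J := by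
    have h0 := integral_comp_mul_left_Ioi g 0 ha2
    rw [mul_zero, smul_eq_mul] at h0
    have h1 : ∀ u ∈ Ioi (0:ℝ), g (a / 2 * u)
        = (a / 2) ^ (ν / 2 - 1) * (u ^ (ν / 2 - 1) * Real.exp (-a * (u + u⁻¹) / 2)) := by
      intro u hu
      have hu0 : (0:ℝ) < u := hu
      rw [hgdef]
      simp only
      rw [Real.mul_rpow ha2.le hu0.le]
      have harg : -(a / 2 * u + ν * t ^ 2 / (4 * (a / 2 * u))) = -a * (u + u⁻¹) / 2 := by
        rw [← hasq]
        field_simp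
        ring
      rw [harg]
      ring
    rw [setIntegral_congr_fun measurableSet_Ioi h1, integral_const_mul, ← hJdef] at h0
    have h2 : (∫ s in Ioi (0:ℝ), g s) = (a / 2) * ((a / 2) ^ (ν / 2 - 1) * J) := by
      rw [h0]
      field_simp
    rw [h2, show ((a / 2 : ℝ) ^ (ν / 2)) = (a / 2) ^ (1 + (ν / 2 - 1)) from by
        rw [show (1 + (ν / 2 - 1) : ℝ) = ν / 2 from by ring],
      Real.rpow_add ha2, Real.rpow_one]
    ring
  -- main computation
  have hGp : (0:ℝ) < Real.Gamma (ν / 2) := Real.Gamma_pos_of_pos (by positivity)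
  have hGq : (0:ℝ) < Real.Gamma ((ν + 1) / 2) := Real.Gamma_pos_of_pos (by positivity)
  have hsπ : (0:ℝ) < Real.sqrt (π * ν) := Real.sqrt_pos.mpr (by positivity)
  have hLHS : (∫ x : ℝ, Complex.exp (Complex.I * t * x) * (studentDensity ν x : ℂ))
      = ((Real.Gamma ((ν + 1) / 2) / (Real.sqrt (π * ν) * Real.Gamma (ν / 2)) *
          ((Real.Gamma ((ν + 1) / 2))⁻¹ * Real.sqrt (π * ν) *
          ∫ s in Ioi (0:ℝ), s ^ (ν / 2 - 1) * Real.exp (-(s + ν * t ^ 2 / (4 * s)))) : ℝ) : ℂ) := by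
    rw [show (fun x : ℝ => Complex.exp (Complex.I * t * x) * (studentDensity ν x : ℂ))
        = fun x : ℝ => ((Real.Gamma ((ν + 1) / 2) /
            (Real.sqrt (π * ν) * Real.Gamma (ν / 2)) : ℝ) : ℂ) *
          (Complex.exp (Complex.I * t * x) * (((1 + x ^ 2 / ν) ^ (-(ν + 1) / 2) : ℝ) : ℂ)) from by
      funext x
      simp only [studentDensity]
      push_cast
      ring]
    rw [integral_const_mul, keyFubini ν hν t, ← Complex.ofReal_mul]
  rw [hLHS, hsub]
  norm_cast
  have e2 : (2:ℝ) ^ (ν / 2 - 1) = 2 ^ (ν / 2) / 2 := by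
    rw [Real.rpow_sub two_pos, Real.rpow_one]
  have e1 : (a / 2 : ℝ) ^ (ν / 2) = a ^ (ν / 2) / 2 ^ (ν / 2) :=
    Real.div_rpow ha.le (by norm_num : (0:ℝ) ≤ 2) (ν / 2)
  rw [e1, e2]
  have h2p : (0:ℝ) < (2:ℝ) ^ (ν / 2) := Real.rpow_pos_of_pos two_pos _
  field_simp
end

section
/- Let ν > 0 and let g : (0,∞) → ℝ be twice differentiable and satisfy x g″(x) − (ν − 1) g′(x) − ν x g(x) = 0 for all x > 0. Then the function f defined on (0,∞) by f(x) = (x/√ν)^{−ν/2} · g(x/√ν) is twice differentiable and satisfies the modified Bessel differential equation of order ν/2: x² f″(x) + x f′(x) − (x² + (ν/2)²) f(x) = 0 for all x > 0. -/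
open Real

noncomputable def besselF1 (ν : ℝ) (g : ℝ → ℝ) : ℝ → ℝ := fun x =>
  ((-(ν / 2)) * (x / Real.sqrt ν) ^ (-(ν / 2) - 1) * g (x / Real.sqrt ν) +
    (x / Real.sqrt ν) ^ (-(ν / 2)) * deriv g (x / Real.sqrt ν)) * (1 / Real.sqrt ν)

noncomputable def besselF2 (ν : ℝ) (g : ℝ → ℝ) : ℝ → ℝ := fun x =>
  ((-(ν / 2)) * ((-(ν / 2) - 1) * (x / Real.sqrt ν) ^ (-(ν / 2) - 1 - 1) * (1 / Real.sqrt ν)) *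
      g (x / Real.sqrt ν) +
    (-(ν / 2)) * (x / Real.sqrt ν) ^ (-(ν / 2) - 1) *
      (deriv g (x / Real.sqrt ν) * (1 / Real.sqrt ν)) +
    ((-(ν / 2)) * (x / Real.sqrt ν) ^ (-(ν / 2) - 1) * (1 / Real.sqrt ν) *
      deriv g (x / Real.sqrt ν) +
     (x / Real.sqrt ν) ^ (-(ν / 2)) * (deriv (deriv g) (x / Real.sqrt ν) * (1 / Real.sqrt ν)))) *
    (1 / Real.sqrt ν)

lemma bessel_alg (ν x A G G' G'' : ℝ) (hν : 0 < ν) (hx : 0 < x)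
    (hode : (x / Real.sqrt ν) * G'' - (ν - 1) * G' - ν * (x / Real.sqrt ν) * G = 0) :
    x ^ 2 * (((-(ν / 2)) * ((-(ν / 2) - 1) * (A / (x / Real.sqrt ν) / (x / Real.sqrt ν)) * (1 / Real.sqrt ν)) * G +
        (-(ν / 2)) * (A / (x / Real.sqrt ν)) * (G' * (1 / Real.sqrt ν)) +
        ((-(ν / 2)) * (A / (x / Real.sqrt ν)) * (1 / Real.sqrt ν) * G' +
          A * (G'' * (1 / Real.sqrt ν)))) * (1 / Real.sqrt ν))
      + x * (((-(ν / 2)) * (A / (x / Real.sqrt ν)) * G + A * G') * (1 / Real.sqrt ν))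
      - (x ^ 2 + (ν / 2) ^ 2) * (A * G) = 0 := by
  have hs : (0:ℝ) < Real.sqrt ν := Real.sqrt_pos.mpr hν
  have hsq : Real.sqrt ν * Real.sqrt ν = ν := Real.mul_self_sqrt hν.le
  field_simp at hode ⊢
  ring_nf at hode ⊢
  linear_combination (4 * x * A) * hode + (-(4:ℝ) * x^2 * A * G) * hsq

theorem studentODE_to_bessel (ν : ℝ) (hν : 0 < ν) (g : ℝ → ℝ)
    (hg : ∀ x > 0, DifferentiableAt ℝ g x)
    (hg' : ∀ x > 0, DifferentiableAt ℝ (deriv g) x)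
    (hODE : ∀ x > 0, x * deriv (deriv g) x - (ν - 1) * deriv g x - ν * x * g x = 0) :
    (∀ x > 0, DifferentiableAt ℝ
      (fun x : ℝ => (x / Real.sqrt ν) ^ (-(ν / 2)) * g (x / Real.sqrt ν)) x) ∧
    (∀ x > 0, DifferentiableAt ℝ
      (deriv (fun x : ℝ => (x / Real.sqrt ν) ^ (-(ν / 2)) * g (x / Real.sqrt ν))) x) ∧
    (∀ x > 0,
      x ^ 2 * deriv (deriv
          (fun x : ℝ => (x / Real.sqrt ν) ^ (-(ν / 2)) * g (x / Real.sqrt ν))) x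
        + x * deriv (fun x : ℝ => (x / Real.sqrt ν) ^ (-(ν / 2)) * g (x / Real.sqrt ν)) x
        - (x ^ 2 + (ν / 2) ^ 2) *
            ((x / Real.sqrt ν) ^ (-(ν / 2)) * g (x / Real.sqrt ν)) = 0) := by
  have hs : (0:ℝ) < Real.sqrt ν := Real.sqrt_pos.mpr hν
  have hsq : Real.sqrt ν * Real.sqrt ν = ν := Real.mul_self_sqrt hν.le
  have hdiv : ∀ x : ℝ, HasDerivAt (fun x : ℝ => x / Real.sqrt ν) (1 / Real.sqrt ν) x :=
    fun x => (hasDerivAt_id x).div_const _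
  -- first derivative
  have key1 : ∀ x > 0, HasDerivAt
      (fun x : ℝ => (x / Real.sqrt ν) ^ (-(ν / 2)) * g (x / Real.sqrt ν))
      (besselF1 ν g x) x := by
    intro x hx
    have hy : 0 < x / Real.sqrt ν := div_pos hx hs
    have h1 : HasDerivAt (fun y : ℝ => y ^ (-(ν / 2)) * g y)
        ((-(ν / 2)) * (x / Real.sqrt ν) ^ (-(ν / 2) - 1) * g (x / Real.sqrt ν) +
          (x / Real.sqrt ν) ^ (-(ν / 2)) * deriv g (x / Real.sqrt ν)) (x / Real.sqrt ν) :=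
      (Real.hasDerivAt_rpow_const (Or.inl hy.ne')).mul ((hg _ hy).hasDerivAt)
    exact h1.comp x (hdiv x)
  have hderiv1 : ∀ x > 0,
      deriv (fun x : ℝ => (x / Real.sqrt ν) ^ (-(ν / 2)) * g (x / Real.sqrt ν)) x
        = besselF1 ν g x := fun x hx => (key1 x hx).deriv
  -- second derivative
  have key2 : ∀ x > 0, HasDerivAt (besselF1 ν g) (besselF2 ν g x) x := by
    intro x hx
    have hy : 0 < x / Real.sqrt ν := div_pos hx hs
    have c1 : HasDerivAt (fun x : ℝ => (x / Real.sqrt ν) ^ (-(ν / 2) - 1))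
        ((-(ν / 2) - 1) * (x / Real.sqrt ν) ^ (-(ν / 2) - 1 - 1) * (1 / Real.sqrt ν)) x :=
      by have h : HasDerivAt (fun y : ℝ => y ^ (-(ν / 2) - 1)) _ (x / Real.sqrt ν) :=
           Real.hasDerivAt_rpow_const (Or.inl hy.ne')
         exact h.comp x (hdiv x)
    have c2 : HasDerivAt (fun x : ℝ => g (x / Real.sqrt ν))
        (deriv g (x / Real.sqrt ν) * (1 / Real.sqrt ν)) x :=
      ((hg _ hy).hasDerivAt).comp x (hdiv x)
    have c3 : HasDerivAt (fun x : ℝ => (x / Real.sqrt ν) ^ (-(ν / 2)))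
        ((-(ν / 2)) * (x / Real.sqrt ν) ^ (-(ν / 2) - 1) * (1 / Real.sqrt ν)) x :=
      by have h : HasDerivAt (fun y : ℝ => y ^ (-(ν / 2))) _ (x / Real.sqrt ν) :=
           Real.hasDerivAt_rpow_const (Or.inl hy.ne')
         exact h.comp x (hdiv x)
    have c4 : HasDerivAt (fun x : ℝ => deriv g (x / Real.sqrt ν))
        (deriv (deriv g) (x / Real.sqrt ν) * (1 / Real.sqrt ν)) x :=
      by have h := (hg' _ hy).hasDerivAt
         exact h.comp x (hdiv x)
    exact (((c1.const_mul (-(ν / 2))).mul c2).add (c3.mul c4)).mul_const (1 / Real.sqrt ν)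
  have hev : ∀ x > 0,
      deriv (fun x : ℝ => (x / Real.sqrt ν) ^ (-(ν / 2)) * g (x / Real.sqrt ν))
        =ᶠ[nhds x] besselF1 ν g := by
    intro x hx
    filter_upwards [Ioi_mem_nhds hx] with t ht using hderiv1 t ht
  have hderiv2 : ∀ x > 0,
      deriv (deriv (fun x : ℝ => (x / Real.sqrt ν) ^ (-(ν / 2)) * g (x / Real.sqrt ν))) x
        = besselF2 ν g x := by
    intro x hx
    rw [Filter.EventuallyEq.deriv_eq (hev x hx)]
    exact (key2 x hx).deriv
  refine ⟨fun x hx => (key1 x hx).differentiableAt, fun x hx =>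
    (key2 x hx).differentiableAt.congr_of_eventuallyEq (hev x hx), fun x hx => ?_⟩
  rw [hderiv1 x hx, hderiv2 x hx]
  have hy : 0 < x / Real.sqrt ν := div_pos hx hs
  have hxy : x = (x / Real.sqrt ν) * Real.sqrt ν := by field_simp
  have hA1 : (x / Real.sqrt ν) ^ (-(ν / 2) - 1)
      = (x / Real.sqrt ν) ^ (-(ν / 2)) / (x / Real.sqrt ν) := by
    rw [Real.rpow_sub hy, Real.rpow_one]
  have hA2 : (x / Real.sqrt ν) ^ (-(ν / 2) - 1 - 1)
      = (x / Real.sqrt ν) ^ (-(ν / 2)) / (x / Real.sqrt ν) / (x / Real.sqrt ν) := by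
    rw [Real.rpow_sub hy, Real.rpow_sub hy, Real.rpow_one]
  have hode := hODE (x / Real.sqrt ν) hy
  simp only [besselF1, besselF2]
  rw [hA1, hA2]
  exact bessel_alg ν x _ _ _ _ hν hx hode
end
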